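/- arXiv:1208.2191 — 8 statements merged into one kernel-verified Lean document; each statement's English description precedes it below -/
import Mathlib

section
/- Let 𝔤 = 𝔥 ⊕ 𝔪 be a symmetric decomposition of a finite-dimensional real Lie algebra 𝔤 with Killing form κ, let θ̂ be a Cartan involution of 𝔤 with θ̂(𝔥) = 𝔥 and θ̂(𝔪) = 𝔪, let S ∈ 𝔪 be nonzero with κ(S,S) = 0, and set 𝔟 := {X ∈ 𝔥 : there exists c ∈ ℝ with [X,S] = c·S}. Assume θ̂(𝔟) = 𝔟. Then 𝔟 is a Lie subalgebra of 𝔥, the restriction of κ to 𝔟 × 𝔟 is nondegenerate, and, setting 𝔫 := {X ∈ 𝔥 : κ(X,B) = 0 for all B ∈ 𝔟}, one has 𝔥 = 𝔟 ⊕ 𝔫 as real vector spaces and [𝔟, 𝔫] ⊆ 𝔫. -/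
/-- Let `𝔤 = 𝔥 ⊕ 𝔪` be a symmetric decomposition of a finite-dimensional
real Lie algebra `𝔤` with Killing form `κ`, let `θ` be a Cartan involution of `𝔤` preserving
`𝔥` and `𝔪`, let `S ∈ 𝔪` be a nonzero null vector, and let `𝔟` be the stabilizer in `𝔥`
of the line `ℝ·S`.  If `θ(𝔟) = 𝔟` then `𝔟` is a Lie subalgebra of `𝔥`, `κ` is nondegenerate
on `𝔟`, and with `𝔫` the `κ`-orthocomplement of `𝔟` in `𝔥` one has `𝔥 = 𝔟 ⊕ 𝔫` and
`[𝔟, 𝔫] ⊆ 𝔫`. -/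
theorem stmt0
    (L : Type*) [LieRing L] [LieAlgebra ℝ L] [FiniteDimensional ℝ L]
    (H M : Submodule ℝ L)
    -- `𝔥` is a Lie subalgebra
    (hHsub : ∀ X ∈ H, ∀ Y ∈ H, ⁅X, Y⁆ ∈ H)
    -- symmetric decomposition conditions
    (hHM : ∀ X ∈ H, ∀ Y ∈ M, ⁅X, Y⁆ ∈ M)
    (hMM : ∀ X ∈ M, ∀ Y ∈ M, ⁅X, Y⁆ ∈ H)
    (hcompl : IsCompl H M)
    -- Cartan involution preserving `𝔥` and `𝔪`
    (θ : L ≃ₗ⁅ℝ⁆ L)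
    (hθinv : ∀ X : L, θ (θ X) = X)
    (hpos : ∀ X : L, X ≠ 0 → 0 < -(killingForm ℝ L X (θ X)))
    (hθH : θ '' (H : Set L) = (H : Set L))
    (hθM : θ '' (M : Set L) = (M : Set L))
    -- the nonzero null vector `S ∈ 𝔪`
    (S : L) (hSM : S ∈ M) (hS0 : S ≠ 0)
    (hSnull : killingForm ℝ L S S = 0)
    -- `𝔟 := stab_𝔥(ℝ S)`, assumed `θ`-invariant
    (b : Set L)
    (hb : b = {X : L | X ∈ H ∧ ∃ c : ℝ, ⁅X, S⁆ = c • S})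
    (hθb : θ '' b = b)
    -- `𝔫 := κ`-orthocomplement of `𝔟` in `𝔥`
    (n : Set L)
    (hn : n = {X : L | X ∈ H ∧ ∀ B ∈ b, killingForm ℝ L X B = 0}) :
    -- `𝔟` is a Lie subalgebra of `𝔥`
    (∀ X ∈ b, ∀ Y ∈ b, ⁅X, Y⁆ ∈ b) ∧
    -- κ restricted to `𝔟 × 𝔟` is nondegenerate
    (∀ X ∈ b, (∀ B ∈ b, killingForm ℝ L X B = 0) → X = 0) ∧
    -- `𝔥 = 𝔟 ⊕ 𝔫` as real vector spaces
    (∀ X ∈ H, ∃ Xb ∈ b, ∃ Xn ∈ n, X = Xb + Xn) ∧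
    (∀ X : L, X ∈ b → X ∈ n → X = 0) ∧
    -- `[𝔟, 𝔫] ⊆ 𝔫`
    (∀ A ∈ b, ∀ N ∈ n, ⁅A, N⁆ ∈ n) := by
  classical
  set κ := killingForm ℝ L with hκ
  -- θ-invariance of κ
  have hκθ : ∀ x y : L, κ (θ x) (θ y) = κ x y := fun x y =>
    LieAlgebra.killingForm_of_equiv_apply θ x y
  have hκsymm : ∀ x y : L, κ x y = κ y x := fun x y => LieModule.traceForm_comm ℝ L L x y
  -- θ maps b into b
  have hθmem : ∀ x ∈ b, θ x ∈ b := fun x hx => by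
    rw [← hθb]; exact ⟨x, hx, rfl⟩
  have hbH : ∀ x ∈ b, x ∈ H := fun x hx => by rw [hb] at hx; exact hx.1
  -- b is a submodule
  have hbadd : ∀ x ∈ b, ∀ y ∈ b, x + y ∈ b := by
    intro x hx y hy
    rw [hb] at hx hy ⊢
    obtain ⟨hxH, c, hc⟩ := hx
    obtain ⟨hyH, d, hd⟩ := hy
    exact ⟨H.add_mem hxH hyH, c + d, by rw [add_lie, hc, hd, add_smul]⟩
  have hbzero : (0 : L) ∈ b := by
    rw [hb]; exact ⟨H.zero_mem, 0, by simp⟩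
  have hbsmul : ∀ (r : ℝ), ∀ x ∈ b, r • x ∈ b := by
    intro r x hx
    rw [hb] at hx ⊢
    obtain ⟨hxH, c, hc⟩ := hx
    exact ⟨H.smul_mem r hxH, r * c, by rw [smul_lie, hc, mul_smul]⟩
  let bS : Submodule ℝ L :=
    { carrier := b
      add_mem' := fun hx hy => hbadd _ hx _ hy
      zero_mem' := hbzero
      smul_mem' := fun r x hx => hbsmul r x hx }
  have hbS : ∀ x : L, x ∈ bS ↔ x ∈ b := fun _ => Iff.rfl
  -- b is a Lie subalgebra
  have hsub : ∀ X ∈ b, ∀ Y ∈ b, ⁅X, Y⁆ ∈ b := by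
    intro X hX Y hY
    rw [hb] at hX hY ⊢
    obtain ⟨hXH, c, hc⟩ := hX
    obtain ⟨hYH, d, hd⟩ := hY
    refine ⟨hHsub X hXH Y hYH, 0, ?_⟩
    rw [lie_lie, hd, hc, lie_smul, lie_smul, hc, hd, smul_smul, smul_smul, mul_comm]
    simp
  -- nondegeneracy on b
  have hnd : ∀ X ∈ b, (∀ B ∈ b, κ X B = 0) → X = 0 := by
    intro X hX hXB
    by_contra hX0
    have := hpos X hX0
    rw [hXB (θ X) (hθmem X hX)] at this
    simp at this
  -- restriction of κ to bS is nondegenerate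
  have hrefl : κ.IsRefl := fun x y h => by rw [hκsymm]; exact h
  have hndres : (κ.restrict bS).Nondegenerate := by
    refine (LinearMap.IsRefl.nondegenerate_iff_separatingLeft (hrefl.domRestrict bS)).mpr ?_
    intro x hx
    ext
    exact hnd x.1 x.2 fun B hB => hx ⟨B, hB⟩
  have hcomplb := (LinearMap.BilinForm.restrict_nondegenerate_iff_isCompl_orthogonal
    (B := κ) (W := bS) hrefl).mp hndres
  -- membership in n
  have hmemn : ∀ x : L, x ∈ n ↔ x ∈ H ∧ ∀ B ∈ b, κ x B = 0 := fun x => by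
    rw [hn]; exact Iff.rfl
  refine ⟨hsub, hnd, ?_, ?_, ?_⟩
  · -- decomposition
    intro X hXH
    obtain ⟨Xb, hXb, Xo, hXo, hsum⟩ := Submodule.mem_sup.mp
      (hcomplb.sup_eq_top ▸ Submodule.mem_top : X ∈ bS ⊔ κ.orthogonal bS)
    refine ⟨Xb, hXb, Xo, ?_, hsum.symm⟩
    rw [hmemn]
    constructor
    · have : Xo = X - Xb := by rw [← hsum]; abel
      rw [this]
      exact H.sub_mem hXH (hbH Xb hXb)
    · intro B hB
      rw [hκsymm]
      exact hXo B hB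
  · -- trivial intersection
    intro X hXb hXn
    rw [hmemn] at hXn
    exact hnd X hXb hXn.2
  · -- [b, n] ⊆ n
    intro A hA N hN
    rw [hmemn] at hN ⊢
    obtain ⟨hNH, hNo⟩ := hN
    refine ⟨hHsub A (hbH A hA) N hNH, fun B hB => ?_⟩
    have h1 : κ ⁅A, N⁆ B = κ A ⁅N, B⁆ := LieModule.traceForm_apply_lie_apply ℝ L L A N B
    have h2 : κ A ⁅N, B⁆ = - κ A ⁅B, N⁆ := by
      rw [← lie_skew N B, map_neg]
    have h3 : κ ⁅A, B⁆ N = κ A ⁅B, N⁆ := LieModule.traceForm_apply_lie_apply ℝ L L A B N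
    rw [h1, h2, ← h3, hκsymm ⁅A, B⁆ N, hNo ⁅A, B⁆ (hsub A hA B hB), neg_zero]
end

section
/- Let S ∈ 𝔪 satisfy tr(S²) = 0 and suppose the characteristic polynomial of S has n distinct roots in ℂ. Then the real vector subspace 𝔟 := {X ∈ 𝔰𝔲(p,q) : there exists c ∈ ℝ with [X,S] = c·S} of Mat_n(ℂ) has real dimension n − 1. -/
open Matrix

/-- The diagonal matrix `I_{p,q}` with `p` ones followed by `q` minus-ones, over `ℂ`. -/
noncomputable def Ipq (p q : ℕ) : Matrix (Fin (p + q)) (Fin (p + q)) ℂ :=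
  Matrix.diagonal (fun i => if (i : ℕ) < p then (1 : ℂ) else -1)

namespace Stmt2Aux

open Polynomial Module

variable {N : Type*} [Fintype N] [DecidableEq N]

/-- The commutant of a matrix `T`, as a complex submodule of the matrix algebra. -/
noncomputable def commSub (T : Matrix N N ℂ) : Submodule ℂ (Matrix N N ℂ) where
  carrier := {A | A * T = T * A}
  add_mem' := fun {a b} ha hb => by
    simp only [Set.mem_setOf_eq] at *
    rw [add_mul, mul_add, ha, hb]
  zero_mem' := by simp
  smul_mem' := fun c A hA => by
    simp only [Set.mem_setOf_eq] at *
    rw [smul_mul_assoc, mul_smul_comm, hA]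

lemma mem_commSub {T A : Matrix N N ℂ} : A ∈ commSub T ↔ A * T = T * A := Iff.rfl

/-- `Matrix.diagonal` as a ℂ-linear map. -/
noncomputable def diagLin : (N → ℂ) →ₗ[ℂ] Matrix N N ℂ where
  toFun := Matrix.diagonal
  map_add' := fun a b => (Matrix.diagonal_add a b).symm
  map_smul' := fun c a => Matrix.diagonal_smul c a

lemma commSub_diagonal {d : N → ℂ} (hd : Function.Injective d) :
    commSub (Matrix.diagonal d) = LinearMap.range (diagLin (N := N)) := by
  ext A
  constructor
  · intro hA
    refine ⟨fun i => A i i, ?_⟩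
    have h := hA
    rw [mem_commSub] at h
    ext i j
    by_cases hij : i = j
    · subst hij; simp [diagLin]
    · have h1 := congrFun (congrFun h i) j
      rw [Matrix.mul_diagonal, Matrix.diagonal_mul] at h1
      have h2 : A i j * (d j - d i) = 0 := by ring_nf; linear_combination h1
      rcases mul_eq_zero.mp h2 with h3 | h3
      · simp [diagLin, Matrix.diagonal_apply_ne _ hij, h3]
      · exact absurd (sub_eq_zero.mp h3) (fun hh => hij (hd hh.symm))
  · rintro ⟨c, rfl⟩
    rw [mem_commSub]
    simp [diagLin, Matrix.diagonal_mul_diagonal, mul_comm]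

lemma finrank_commSub_diagonal {d : N → ℂ} (hd : Function.Injective d) :
    finrank ℂ (commSub (Matrix.diagonal d)) = Fintype.card N := by
  rw [commSub_diagonal hd]
  have hinj : Function.Injective (diagLin (N := N)) := by
    intro a b hab
    simpa [diagLin] using congrArg (fun M => fun i => M i i) hab
  rw [LinearMap.finrank_range_of_inj hinj]
  simp

lemma comm_conj_aux {P Pinv D A : Matrix N N ℂ} (h2 : Pinv * P = 1)
    (hA : A * (P * D * Pinv) = (P * D * Pinv) * A) :
    (Pinv * A * P) * D = D * (Pinv * A * P) := by
  calc (Pinv * A * P) * D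
      = Pinv * (A * (P * D * Pinv)) * P := by
        simp only [← mul_assoc]
        rw [mul_assoc (Pinv * A * P * D) Pinv P, h2, mul_one]
    _ = Pinv * ((P * D * Pinv) * A) * P := by rw [hA]
    _ = D * (Pinv * A * P) := by
        simp only [← mul_assoc]
        rw [h2, one_mul]

lemma comm_conj_aux2 {P Pinv D B : Matrix N N ℂ} (h1 : P * Pinv = 1) (h2 : Pinv * P = 1)
    (hB : B * D = D * B) :
    (P * B * Pinv) * (P * D * Pinv) = (P * D * Pinv) * (P * B * Pinv) := by
  calc (P * B * Pinv) * (P * D * Pinv)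
      = P * (B * D) * Pinv := by
        simp only [← mul_assoc]
        rw [mul_assoc (P * B) Pinv P, h2, mul_one]
    _ = P * (D * B) * Pinv := by rw [hB]
    _ = (P * D * Pinv) * (P * B * Pinv) := by
        simp only [← mul_assoc]
        rw [mul_assoc (P * D) Pinv P, h2, mul_one]

lemma conj_cancel1 {P Pinv A : Matrix N N ℂ} (h1 : P * Pinv = 1) (h2 : Pinv * P = 1) :
    P * (Pinv * A * P) * Pinv = A := by
  simp only [← mul_assoc]
  rw [h1, one_mul, mul_assoc, h1, mul_one]

/-- Conjugation equivalence between commutants. -/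
noncomputable def conjCommEquiv (P Pinv D : Matrix N N ℂ) (h1 : P * Pinv = 1)
    (h2 : Pinv * P = 1) : commSub (P * D * Pinv) ≃ₗ[ℂ] commSub D where
  toFun A := ⟨Pinv * A.1 * P, comm_conj_aux h2 A.2⟩
  map_add' := fun a b => by
    apply Subtype.ext
    simp [mul_add, add_mul]
  map_smul' := fun c a => by
    apply Subtype.ext
    simp [mul_smul_comm, smul_mul_assoc]
  invFun B := ⟨P * B.1 * Pinv, comm_conj_aux2 h1 h2 B.2⟩
  left_inv := fun A => by
    apply Subtype.ext
    show P * (Pinv * A.1 * P) * Pinv = A.1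
    exact conj_cancel1 h1 h2
  right_inv := fun B => by
    apply Subtype.ext
    show Pinv * (P * B.1 * Pinv) * P = B.1
    exact conj_cancel1 h2 h1

lemma finrank_commSub_conj {P Pinv D : Matrix N N ℂ} (h1 : P * Pinv = 1) (h2 : Pinv * P = 1) :
    finrank ℂ (commSub (P * D * Pinv)) = finrank ℂ (commSub D) :=
  (conjCommEquiv P Pinv D h1 h2).finrank_eq

/-- Real submodule of matrices commuting with `T` on which `A ↦ J Aᴴ J` acts as `ε`. -/
noncomputable def fixSub (J T : Matrix N N ℂ) (ε : ℂ) : Submodule ℝ (Matrix N N ℂ) where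
  carrier := {A | A * T = T * A ∧ J * Aᴴ * J = ε • A}
  add_mem' := fun {a b} ha hb => by
    constructor
    · rw [add_mul, mul_add, ha.1, hb.1]
    · rw [conjTranspose_add, mul_add, add_mul, ha.2, hb.2, smul_add]
  zero_mem' := by simp
  smul_mem' := fun c A hA => by
    constructor
    · rw [smul_mul_assoc, mul_smul_comm, hA.1]
    · rw [conjTranspose_smul, star_trivial, mul_smul_comm, smul_mul_assoc, hA.2, smul_comm]

lemma mem_fixSub {J T A : Matrix N N ℂ} {ε : ℂ} :
    A ∈ fixSub J T ε ↔ A * T = T * A ∧ J * Aᴴ * J = ε • A := Iff.rfl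

section Fix

variable {J T : Matrix N N ℂ}

lemma sigma_comm (hJ2 : J * J = 1) (hTJ : Tᴴ * J = J * T) {A : Matrix N N ℂ}
    (hA : A * T = T * A) : (J * Aᴴ * J) * T = T * (J * Aᴴ * J) := by
  have hJT : J * Tᴴ = T * J := by
    have h : Tᴴ = J * T * J := by
      rw [← hTJ, mul_assoc, hJ2, mul_one]
    rw [h]
    simp only [← mul_assoc]
    rw [hJ2, one_mul]
  calc (J * Aᴴ * J) * T
      = J * (Aᴴ * Tᴴ) * J := by
        rw [mul_assoc (J * Aᴴ) J T, ← hTJ]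
        simp only [← mul_assoc]
    _ = J * (T * A)ᴴ * J := by rw [conjTranspose_mul]
    _ = J * (A * T)ᴴ * J := by rw [hA]
    _ = J * Tᴴ * (Aᴴ * J) := by
        rw [conjTranspose_mul]
        simp only [← mul_assoc]
    _ = T * (J * Aᴴ * J) := by
        rw [hJT]
        simp only [← mul_assoc]

lemma sigma_invol (hJ2 : J * J = 1) (hJH : Jᴴ = J) (A : Matrix N N ℂ) :
    J * (J * Aᴴ * J)ᴴ * J = A := by
  have h : (J * Aᴴ * J)ᴴ = J * A * J := by
    simp [conjTranspose_mul, hJH, mul_assoc]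
  rw [h]
  simp only [← mul_assoc]
  rw [hJ2, one_mul, mul_assoc, hJ2, mul_one]

lemma fixSub_inf : fixSub J T (-1) ⊓ fixSub J T 1 = ⊥ := by
  ext A
  simp only [Submodule.mem_inf, mem_fixSub, Submodule.mem_bot]
  constructor
  · rintro ⟨⟨-, h1⟩, ⟨-, h2⟩⟩
    have h3 : -A = A := by simpa using h1.symm.trans h2
    have h5 : (2 : ℂ) • A = 0 := by
      rw [two_smul]
      nth_rewrite 1 [← h3]
      exact neg_add_cancel A
    rcases smul_eq_zero.mp h5 with h | h
    · exact absurd h (by norm_num)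
    · exact h
  · rintro rfl
    simp

lemma fixSub_sup (hJ2 : J * J = 1) (hJH : Jᴴ = J) (hTJ : Tᴴ * J = J * T) :
    fixSub J T (-1) ⊔ fixSub J T 1 = (commSub T).restrictScalars ℝ := by
  apply le_antisymm
  · apply sup_le
    · intro A hA; exact hA.1
    · intro A hA; exact hA.1
  · intro A hA
    have hc : A * T = T * A := hA
    have hBc : (J * Aᴴ * J) * T = T * (J * Aᴴ * J) := sigma_comm hJ2 hTJ hc
    have hJB : J * (J * Aᴴ * J)ᴴ * J = A := sigma_invol hJ2 hJH A
    refine Submodule.mem_sup.mpr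
      ⟨(1/2 : ℝ) • (A - J * Aᴴ * J), ⟨?_, ?_⟩, (1/2 : ℝ) • (A + J * Aᴴ * J), ⟨?_, ?_⟩, ?_⟩
    · rw [smul_mul_assoc, mul_smul_comm, sub_mul, mul_sub, hc, hBc]
    · have key : J * (A - J * Aᴴ * J)ᴴ * J = (J * Aᴴ * J) - A := by
        rw [conjTranspose_sub, mul_sub, sub_mul, hJB]
      rw [conjTranspose_smul, star_trivial, mul_smul_comm, smul_mul_assoc, key]
      module
    · rw [smul_mul_assoc, mul_smul_comm, add_mul, mul_add, hc, hBc]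
    · have key : J * (A + J * Aᴴ * J)ᴴ * J = (J * Aᴴ * J) + A := by
        rw [conjTranspose_add, mul_add, add_mul, hJB]
      rw [conjTranspose_smul, star_trivial, mul_smul_comm, smul_mul_assoc, key]
      module
    · module

/-- Multiplication by `i` as an equivalence between the two fixed subspaces. -/
noncomputable def fixSubEquiv (J T : Matrix N N ℂ) :
    (fixSub J T (-1)) ≃ₗ[ℝ] (fixSub J T 1) where
  toFun A := ⟨Complex.I • A.1, by
    constructor
    · rw [smul_mul_assoc, mul_smul_comm, A.2.1]
    · rw [conjTranspose_smul, Complex.star_def, Complex.conj_I, mul_smul_comm,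
        smul_mul_assoc, A.2.2, smul_smul, smul_smul]
      norm_num⟩
  map_add' := fun a b => Subtype.ext (by
    show Complex.I • (a.1 + b.1) = Complex.I • a.1 + Complex.I • b.1
    rw [smul_add])
  map_smul' := fun c a => Subtype.ext (by
    show Complex.I • (c • a.1) = c • (Complex.I • a.1)
    rw [smul_comm])
  invFun B := ⟨(-Complex.I) • B.1, by
    constructor
    · rw [smul_mul_assoc, mul_smul_comm, B.2.1]
    · rw [conjTranspose_smul, Complex.star_def, map_neg, Complex.conj_I, neg_neg,
        mul_smul_comm, smul_mul_assoc, B.2.2, smul_smul, smul_smul]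
      norm_num⟩
  left_inv := fun A => by
    apply Subtype.ext
    show (-Complex.I) • (Complex.I • A.1) = A.1
    rw [smul_smul]
    norm_num
  right_inv := fun B => by
    apply Subtype.ext
    show Complex.I • ((-Complex.I) • B.1) = B.1
    rw [smul_smul]
    norm_num

end Fix

end Stmt2Aux

set_option maxHeartbeats 1000000 in
set_option synthInstance.maxHeartbeats 400000 in
/-- If `S ∈ 𝔪` satisfies `tr(S²) = 0` and its characteristic polynomial has
`n` distinct complex roots, then `𝔟 = {X ∈ 𝔰𝔲(p,q) : ∃ c ∈ ℝ, [X,S] = c·S}` has real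
dimension `n - 1`. -/
theorem stmt2 (p q : ℕ) (hp : 1 ≤ p) (hq : 1 ≤ q) (hn : 3 ≤ p + q)
    (S : Matrix (Fin (p + q)) (Fin (p + q)) ℂ)
    (hStr : Matrix.trace S = 0)
    (hSm : Sᴴ * Ipq p q = Ipq p q * S)
    (hSnull : Matrix.trace (S * S) = 0)
    (hdist : ∃ lam : Fin (p + q) → ℂ, Function.Injective lam ∧
      S.charpoly = ∏ i, (Polynomial.X - Polynomial.C (lam i))) :
    Module.finrank ℝ ↥(Submodule.span ℝ
      {A : Matrix (Fin (p + q)) (Fin (p + q)) ℂ |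
        (Matrix.trace A = 0 ∧ Aᴴ * Ipq p q + Ipq p q * A = 0) ∧
        ∃ c : ℝ, A * S - S * A = c • S}) = p + q - 1 := by
  classical
  obtain ⟨lam, hinj, hch⟩ := hdist
  -- basic facts about Ipq
  have hJ2 : Ipq p q * Ipq p q = 1 := by
    ext i j
    rw [Ipq, Matrix.diagonal_mul_diagonal]
    by_cases hij : i = j
    · subst hij
      by_cases h : (i : ℕ) < p <;> simp [h, Matrix.one_apply]
    · simp [Matrix.diagonal_apply_ne _ hij, Matrix.one_apply_ne hij]
  have hstar : (star fun i : Fin (p+q) => if (i : ℕ) < p then (1 : ℂ) else -1)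
      = fun i : Fin (p+q) => if (i : ℕ) < p then (1 : ℂ) else -1 := by
    funext i
    by_cases h : (i : ℕ) < p <;> simp [h]
  have hJH : (Ipq p q)ᴴ = Ipq p q := by
    rw [Ipq, Matrix.diagonal_conjTranspose, hstar]
  -- eigenvectors
  have hdet : ∀ i, ((lam i) • (1 : Matrix (Fin (p+q)) (Fin (p+q)) ℂ) - S).det = 0 := by
    intro i
    have h1 : Polynomial.eval (lam i) S.charpoly = 0 := by
      rw [hch, Polynomial.eval_prod]
      apply Finset.prod_eq_zero (Finset.mem_univ i)
      simp
    have h2 : Polynomial.eval (lam i) S.charpoly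
        = ((lam i) • (1 : Matrix (Fin (p+q)) (Fin (p+q)) ℂ) - S).det := by
      rw [Matrix.charpoly, ← Polynomial.coe_evalRingHom, RingHom.map_det]
      congr 1
      ext a b
      by_cases hab : a = b
      · subst hab
        simp [Matrix.charmatrix_apply_eq, Matrix.one_apply]
      · simp [Matrix.charmatrix_apply_ne _ _ _ hab, Matrix.one_apply_ne hab]
    rw [← h2]
    exact h1
  have hev : ∀ i, ∃ v : Fin (p+q) → ℂ, v ≠ 0 ∧ S *ᵥ v = lam i • v := by
    intro i
    obtain ⟨v, hv, hme⟩ := (Matrix.exists_mulVec_eq_zero_iff).mpr (hdet i)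
    refine ⟨v, hv, ?_⟩
    rw [Matrix.sub_mulVec, Matrix.smul_mulVec, Matrix.one_mulVec] at hme
    exact (sub_eq_zero.mp hme).symm
  choose v hv0 hvS using hev
  let f : Module.End ℂ (Fin (p+q) → ℂ) := Matrix.mulVecLin S
  have hEig : ∀ i, f.HasEigenvector (lam i) (v i) := fun i =>
    ⟨Module.End.mem_eigenspace_iff.mpr (by simpa [f, Matrix.mulVecLin_apply] using hvS i), hv0 i⟩
  have hli : LinearIndependent ℂ v :=
    Module.End.eigenvectors_linearIndependent' f lam hinj v hEig
  have hcard : Fintype.card (Fin (p+q)) = Module.finrank ℂ (Fin (p+q) → ℂ) := by simp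
  haveI : Nonempty (Fin (p+q)) := ⟨⟨0, by omega⟩⟩
  let b : Module.Basis (Fin (p+q)) ℂ (Fin (p+q) → ℂ) := basisOfLinearIndependentOfCardEqFinrank hli hcard
  have hb : ⇑b = v := coe_basisOfLinearIndependentOfCardEqFinrank hli hcard
  let P := (Pi.basisFun ℂ (Fin (p+q))).toMatrix ⇑b
  have hPinv : Invertible P := (Pi.basisFun ℂ (Fin (p+q))).invertibleToMatrix b
  let Pinv := ⅟P
  have hPP : P * Pinv = 1 := mul_invOf_self P
  have hPiP : Pinv * P = 1 := invOf_mul_self P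
  have hPapp : ∀ i j, P i j = v j i := by
    intro i j
    simp [P, Module.Basis.toMatrix_apply, hb]
  have hSP : S * P = P * Matrix.diagonal lam := by
    ext i j
    rw [Matrix.mul_apply, Matrix.mul_diagonal, hPapp]
    have hs := congrFun (hvS j) i
    simp only [Matrix.mulVec, dotProduct, Pi.smul_apply, smul_eq_mul] at hs
    rw [show (∑ k, S i k * P k j) = ∑ k, S i k * v j k from by
      simp only [hPapp], hs, mul_comm]
  have hS : S = P * Matrix.diagonal lam * Pinv := by
    calc S = S * (P * Pinv) := by rw [hPP, mul_one]
      _ = (S * P) * Pinv := by rw [mul_assoc]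
      _ = P * Matrix.diagonal lam * Pinv := by rw [hSP]
    -- traces of powers
  have hpow : ∀ m : ℕ, S ^ (m+1) = P * (Matrix.diagonal lam) ^ (m+1) * Pinv := by
    intro m
    induction m with
    | zero => simpa [pow_one] using hS
    | succ k ih =>
      rw [pow_succ S (k+1), ih, hS, pow_succ (Matrix.diagonal lam) (k+1)]
      simp only [← mul_assoc]
      rw [mul_assoc (P * Matrix.diagonal lam ^ (k+1)) Pinv P, hPiP, mul_one]
  have htr : ∀ m : ℕ, Matrix.trace (S ^ (m+1)) = ∑ i, lam i ^ (m+1) := by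
    intro m
    rw [hpow m, Matrix.trace_mul_cycle, hPiP, one_mul,
      Matrix.diagonal_pow, Matrix.trace_diagonal]
    simp
  -- forcing c = 0
  have hforce : ∀ (A : Matrix (Fin (p+q)) (Fin (p+q)) ℂ) (c : ℝ),
      A * S - S * A = c • S → A * S = S * A := by
    intro A c hcS
    rcases eq_or_ne c 0 with h0 | h0
    · rw [h0, zero_smul] at hcS
      exact sub_eq_zero.mp hcS
    · exfalso
      have hm : ∀ m : ℕ, Matrix.trace (S ^ (m+1)) = 0 := by
        intro m
        cases m with
        | zero => simpa using hStr
        | succ k =>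
          have e1 : Matrix.trace ((A * S - S * A) * S ^ (k+1)) = 0 := by
            rw [sub_mul, Matrix.trace_sub, mul_assoc A S (S^(k+1)), ← pow_succ' S (k+1),
              mul_assoc S A (S^(k+1)), Matrix.trace_mul_comm S (A * S ^ (k+1)),
              mul_assoc A (S^(k+1)) S, ← pow_succ S (k+1), sub_self]
          have e2 : Matrix.trace ((A * S - S * A) * S ^ (k+1)) = c • Matrix.trace (S ^ (k+2)) := by
            rw [hcS, smul_mul_assoc, Matrix.trace_smul, ← pow_succ' S (k+1)]
          rw [e2] at e1
          rcases smul_eq_zero.mp e1 with h | h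
          · exact absurd h h0
          · exact h
      have hlam : lam = 0 := by
        apply Matrix.eq_zero_of_forall_pow_sum_mul_pow_eq_zero hinj
        intro i
        have hz := hm (i : ℕ)
        rw [htr] at hz
        calc (∑ j, lam j * lam j ^ (i : ℕ)) = ∑ j, lam j ^ ((i : ℕ)+1) := by
              apply Finset.sum_congr rfl
              intro j _
              rw [← pow_succ']
          _ = 0 := hz
      have h01 : (⟨0, by omega⟩ : Fin (p+q)) = ⟨1, by omega⟩ := by
        apply hinj
        simp [hlam]
      simpa using h01
  -- the complex dimension of the commutant
  have hfinC : Module.finrank ℂ (Stmt2Aux.commSub S) = p + q := by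
    rw [hS, Stmt2Aux.finrank_commSub_conj hPP hPiP,
      Stmt2Aux.finrank_commSub_diagonal hinj, Fintype.card_fin]
  -- the real fixed subspaces
  haveI : FiniteDimensional ℝ (Matrix (Fin (p+q)) (Fin (p+q)) ℂ) := by infer_instance
  have hFG_inf : Stmt2Aux.fixSub (Ipq p q) S (-1) ⊓ Stmt2Aux.fixSub (Ipq p q) S 1 = ⊥ :=
    Stmt2Aux.fixSub_inf
  have hFG_sup : Stmt2Aux.fixSub (Ipq p q) S (-1) ⊔ Stmt2Aux.fixSub (Ipq p q) S 1
      = (Stmt2Aux.commSub S).restrictScalars ℝ :=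
    Stmt2Aux.fixSub_sup hJ2 hJH hSm
  have hU : Module.finrank ℝ ((Stmt2Aux.commSub S).restrictScalars ℝ) = 2 * (p+q) := by
    rw [((Submodule.restrictScalarsEquiv ℝ ℂ _ (Stmt2Aux.commSub S)).restrictScalars ℝ).finrank_eq]
    have hmm := Module.finrank_mul_finrank ℝ ℂ ↥(Stmt2Aux.commSub S)
    rw [Complex.finrank_real_complex, hfinC] at hmm
    omega
  have hFGeq : Module.finrank ℝ (Stmt2Aux.fixSub (Ipq p q) S (-1))
      = Module.finrank ℝ (Stmt2Aux.fixSub (Ipq p q) S 1) :=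
    (Stmt2Aux.fixSubEquiv (Ipq p q) S).finrank_eq
  have hsum := Submodule.finrank_sup_add_finrank_inf_eq
    (Stmt2Aux.fixSub (Ipq p q) S (-1)) (Stmt2Aux.fixSub (Ipq p q) S 1)
  rw [hFG_inf, hFG_sup, hU, finrank_bot] at hsum
  have hF : Module.finrank ℝ (Stmt2Aux.fixSub (Ipq p q) S (-1)) = p + q := by omega
  -- the trace functional
  let t : Matrix (Fin (p+q)) (Fin (p+q)) ℂ →ₗ[ℝ] ℂ := Matrix.traceLinearMap (Fin (p+q)) ℝ ℂ
  let g := t.domRestrict (Stmt2Aux.fixSub (Ipq p q) S (-1))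
  have hrange : Module.finrank ℝ (LinearMap.range g) = 1 := by
    have hle : LinearMap.range g ≤ Submodule.span ℝ {Complex.I} := by
      rintro z ⟨⟨A, hA⟩, rfl⟩
      have h2 := hA.2
      have h3 : Matrix.trace (Ipq p q * Aᴴ * Ipq p q) = Matrix.trace ((-1 : ℂ) • A) := by
        rw [h2]
      rw [Matrix.trace_mul_cycle, hJ2, one_mul, Matrix.trace_conjTranspose,
        Matrix.trace_smul] at h3
      have hre : (Matrix.trace A).re = 0 := by
        have h4 := congrArg Complex.re h3
        simp only [Complex.star_def, Complex.conj_re, neg_one_smul, Complex.neg_re] at h4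
        linarith
      refine Submodule.mem_span_singleton.mpr ⟨(Matrix.trace A).im, ?_⟩
      show (Matrix.trace A).im • Complex.I = g ⟨A, hA⟩
      have hg : g ⟨A, hA⟩ = Matrix.trace A := rfl
      rw [hg]
      apply Complex.ext <;> simp [hre]
    have hmem : (Complex.I • (1 : Matrix (Fin (p+q)) (Fin (p+q)) ℂ))
        ∈ Stmt2Aux.fixSub (Ipq p q) S (-1) := by
      constructor
      · rw [smul_mul_assoc, mul_smul_comm, one_mul, mul_one]
      · rw [conjTranspose_smul, Complex.star_def, Complex.conj_I, conjTranspose_one,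
          mul_smul_comm, smul_mul_assoc, mul_one, hJ2, smul_smul, neg_one_mul]
    have hne : LinearMap.range g ≠ ⊥ := by
      intro hbot
      have hg0 : g = 0 := LinearMap.range_eq_bot.mp hbot
      have hz' : Matrix.trace (Complex.I • (1 : Matrix (Fin (p+q)) (Fin (p+q)) ℂ)) = 0 := by
        have hz := DFunLike.congr_fun hg0 ⟨_, hmem⟩
        simpa [g, t] using hz
      rw [Matrix.trace_smul, Matrix.trace_one, smul_eq_mul] at hz'
      have hcne : ((Fintype.card (Fin (p+q)) : ℂ)) ≠ 0 := by
        simp only [Fintype.card_fin]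
        exact_mod_cast (by omega : (p+q : ℕ) ≠ 0)
      rcases mul_eq_zero.mp hz' with h | h
      · exact Complex.I_ne_zero h
      · exact hcne h
    have hle1 : Module.finrank ℝ (LinearMap.range g) ≤ 1 := by
      have hmono := Submodule.finrank_mono hle
      rwa [finrank_span_singleton Complex.I_ne_zero] at hmono
    have hge1 : 1 ≤ Module.finrank ℝ (LinearMap.range g) := by
      rw [Nat.one_le_iff_ne_zero]
      intro h0
      exact hne (Submodule.finrank_eq_zero.mp h0)
    omega
  have hkerg : Module.finrank ℝ (LinearMap.ker g) = p + q - 1 := by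
    have hrk := LinearMap.finrank_range_add_finrank_ker g
    rw [hrange, hF] at hrk
    omega
  -- identification of the set with the kernel
  have hset : {A : Matrix (Fin (p + q)) (Fin (p + q)) ℂ |
        (Matrix.trace A = 0 ∧ Aᴴ * Ipq p q + Ipq p q * A = 0) ∧
        ∃ c : ℝ, A * S - S * A = c • S}
      = ((Submodule.map (Stmt2Aux.fixSub (Ipq p q) S (-1)).subtype (LinearMap.ker g)) :
          Set (Matrix (Fin (p + q)) (Fin (p + q)) ℂ)) := by
    ext A
    simp only [Set.mem_setOf_eq, SetLike.mem_coe, Submodule.mem_map, LinearMap.mem_ker]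
    constructor
    · rintro ⟨⟨htr0, hsu⟩, ⟨c, hcS⟩⟩
      have hcomm := hforce A c hcS
      have h1 : Aᴴ * Ipq p q = -(Ipq p q * A) := eq_neg_of_add_eq_zero_left hsu
      have hfix : Ipq p q * Aᴴ * Ipq p q = (-1 : ℂ) • A := by
        rw [mul_assoc, h1, mul_neg, ← mul_assoc, hJ2, one_mul, neg_one_smul]
      refine ⟨⟨A, hcomm, hfix⟩, ?_, rfl⟩
      show Matrix.trace A = 0
      exact htr0
    · rintro ⟨⟨A', hA'⟩, hk, rfl⟩
      simp only [Submodule.subtype_apply]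
      have htr0 : Matrix.trace A' = 0 := hk
      have hfix := hA'.2
      have h1 : A'ᴴ * Ipq p q = -(Ipq p q * A') := by
        have h3 : Ipq p q * (Ipq p q * A'ᴴ * Ipq p q) = Ipq p q * ((-1 : ℂ) • A') := by
          rw [hfix]
        simp only [← mul_assoc] at h3
        rw [hJ2, one_mul] at h3
        rw [h3, mul_smul_comm, neg_one_smul]
      refine ⟨⟨htr0, by rw [h1, neg_add_cancel]⟩, ⟨0, ?_⟩⟩
      rw [hA'.1, sub_self, zero_smul]
  rw [hset, Submodule.span_eq, ← hkerg]
  exact ((Submodule.equivMapOfInjective _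
    (Submodule.injective_subtype (Stmt2Aux.fixSub (Ipq p q) S (-1))) (LinearMap.ker g)).symm).finrank_eq
end

section
/- Let λ₁, …, λₙ ∈ ℂ be pairwise distinct and such that λᵢ ∉ ℝ and λ_{n+1−i} = conj(λᵢ) for 1 ≤ i ≤ r, while λᵢ ∈ ℝ for r < i ≤ n − r, and let S := diag(λ₁, …, λₙ). Then {X ∈ 𝔥_T : there exists c ∈ ℝ with [X,S] = c·S} equals the set of diagonal matrices diag(z₁, …, z_r, i·x₁, …, i·x_{n−2r}, −conj(z_r), …, −conj(z₁)) with z₁, …, z_r ∈ ℂ and x₁, …, x_{n−2r} ∈ ℝ satisfying 2·(Im z₁ + ⋯ + Im z_r) + (x₁ + ⋯ + x_{n−2r}) = 0. In particular this set is a real vector space of dimension n − 1 and is invariant under the conjugate-transpose map X ↦ X†. -/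
open Matrix

/-- The matrix `T_{p,q,r}` with block rows `[0,0,R_r]`, `[0,I_{p-r,q-r},0]`, `[R_r,0,0]`,
where `R_r` is the `r × r` anti-diagonal matrix of ones. -/
noncomputable def Tpqr (p q r : ℕ) : Matrix (Fin (p + q)) (Fin (p + q)) ℂ :=
  Matrix.of fun i j =>
    if (i : ℕ) < r ∨ p + q - r ≤ (i : ℕ) then
      (if (i : ℕ) + (j : ℕ) = p + q - 1 then 1 else 0)
    else if j = i then (if (i : ℕ) < p then 1 else -1) else 0

namespace Stmt3Aux

noncomputable def dvec (p q r : ℕ) (z : Fin (p + q) → ℂ) (x : Fin (p + q) → ℝ) :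
    Fin (p + q) → ℂ :=
  fun i : Fin (p + q) => if (i : ℕ) < r then z i
    else if (i : ℕ) < p + q - r then Complex.I * (x i : ℂ)
    else -(starRingEnd ℂ) (z (Fin.rev i))

lemma sum_rev {p q r : ℕ} (h2r : 2 * r ≤ p + q) {M : Type*} [AddCommMonoid M]
    (f : Fin (p + q) → M) :
    ∑ i ∈ Finset.univ.filter (fun i : Fin (p + q) => ¬ (i : ℕ) < r ∧ ¬ (i : ℕ) < p + q - r), f i
      = ∑ i ∈ Finset.univ.filter (fun i : Fin (p + q) => (i : ℕ) < r), f (Fin.rev i) := by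
  apply Finset.sum_nbij' (fun i => Fin.rev i) (fun i => Fin.rev i)
  · intro a ha
    simp only [Finset.mem_filter, Finset.mem_univ, true_and] at ha ⊢
    have := a.isLt; have hv := Fin.val_rev a; omega
  · intro a ha
    simp only [Finset.mem_filter, Finset.mem_univ, true_and] at ha ⊢
    have := a.isLt; have hv := Fin.val_rev a; omega
  · intro a _; exact Fin.rev_rev a
  · intro a _; exact Fin.rev_rev a
  · intro a _; rw [Fin.rev_rev]

lemma sum_dvec {p q r : ℕ} (hrp : r ≤ p) (hrq : r ≤ q)
    (z : Fin (p + q) → ℂ) (x : Fin (p + q) → ℝ) :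
    ∑ i, dvec p q r z x i =
      Complex.I * ((2 * (∑ i ∈ Finset.univ.filter (fun i : Fin (p + q) => (i : ℕ) < r), (z i).im)
          + ∑ i ∈ Finset.univ.filter
              (fun i : Fin (p + q) => r ≤ (i : ℕ) ∧ (i : ℕ) < p + q - r), x i : ℝ) : ℂ) := by
  classical
  have h2r : 2 * r ≤ p + q := by omega
  rw [← Finset.sum_filter_add_sum_filter_not Finset.univ
    (fun i : Fin (p + q) => (i : ℕ) < r) (dvec p q r z x),
    ← Finset.sum_filter_add_sum_filter_not
      (Finset.univ.filter (fun i : Fin (p + q) => ¬ (i : ℕ) < r))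
      (fun i : Fin (p + q) => (i : ℕ) < p + q - r) (dvec p q r z x),
    Finset.filter_filter, Finset.filter_filter]
  rw [sum_rev h2r]
  have e1 : ∑ i ∈ Finset.univ.filter (fun i : Fin (p + q) => (i : ℕ) < r), dvec p q r z x i
      = ∑ i ∈ Finset.univ.filter (fun i : Fin (p + q) => (i : ℕ) < r), z i :=
    Finset.sum_congr rfl fun i hi => by
      simp only [Finset.mem_filter, Finset.mem_univ, true_and] at hi
      simp [dvec, hi]
  have e2 : ∑ i ∈ Finset.univ.filter
        (fun i : Fin (p + q) => ¬ (i : ℕ) < r ∧ (i : ℕ) < p + q - r), dvec p q r z x i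
      = ∑ i ∈ Finset.univ.filter
        (fun i : Fin (p + q) => ¬ (i : ℕ) < r ∧ (i : ℕ) < p + q - r), Complex.I * (x i : ℂ) :=
    Finset.sum_congr rfl fun i hi => by
      simp only [Finset.mem_filter, Finset.mem_univ, true_and] at hi
      simp [dvec, hi.1, hi.2]
  have e3 : ∑ i ∈ Finset.univ.filter (fun i : Fin (p + q) => (i : ℕ) < r),
        dvec p q r z x (Fin.rev i)
      = ∑ i ∈ Finset.univ.filter (fun i : Fin (p + q) => (i : ℕ) < r),
        (((2 * (z i).im : ℝ) : ℂ) * Complex.I - z i) :=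
    Finset.sum_congr rfl fun i hi => by
      simp only [Finset.mem_filter, Finset.mem_univ, true_and] at hi
      have h1 : ¬ ((Fin.rev i : ℕ) < r) := by
        have := Fin.val_rev i; have := i.isLt; omega
      have h2 : ¬ ((Fin.rev i : ℕ) < p + q - r) := by
        have := Fin.val_rev i; have := i.isLt; omega
      simp only [dvec, h1, h2, if_false, Fin.rev_rev]
      have := Complex.sub_conj (z i)
      push_cast at this ⊢
      linear_combination this
  rw [e1, e2, e3]
  have efilt : Finset.univ.filter
        (fun i : Fin (p + q) => r ≤ (i : ℕ) ∧ (i : ℕ) < p + q - r)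
      = Finset.univ.filter
        (fun i : Fin (p + q) => ¬ (i : ℕ) < r ∧ (i : ℕ) < p + q - r) := by
    apply Finset.filter_congr; intro i _; simp [Nat.not_lt]
  rw [efilt, Finset.sum_sub_distrib]
  push_cast [Finset.mul_sum, mul_add, Finset.sum_mul]
  ring_nf

noncomputable def diagL (n : ℕ) : (Fin n → ℂ) →ₗ[ℝ] Matrix (Fin n) (Fin n) ℂ where
  toFun d := Matrix.diagonal d
  map_add' a b := (Matrix.diagonal_add a b).symm ▸ rfl
  map_smul' c a := by ext i j; by_cases h : i = j <;> simp [Matrix.diagonal, h]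

lemma diagL_inj (n : ℕ) : Function.Injective (diagL n) := fun a b h =>
  Matrix.diagonal_injective h

noncomputable def D0 (p q r : ℕ) : Submodule ℝ (Fin (p + q) → ℂ) where
  carrier := {d | (∀ i : Fin (p + q), r ≤ (i : ℕ) → (i : ℕ) < p + q - r → (d i).re = 0) ∧
    (∀ i : Fin (p + q), p + q - r ≤ (i : ℕ) → d i = -(starRingEnd ℂ) (d (Fin.rev i)))}
  add_mem' := by
    rintro a b ⟨ha1, ha2⟩ ⟨hb1, hb2⟩
    refine ⟨fun i h1 h2 => ?_, fun i h => ?_⟩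
    · simp [Complex.add_re, ha1 i h1 h2, hb1 i h1 h2]
    · simp only [Pi.add_apply, map_add, ha2 i h, hb2 i h]; ring
  zero_mem' := ⟨fun i _ _ => rfl, fun i _ => by simp⟩
  smul_mem' := by
    rintro c a ⟨h1, h2⟩
    refine ⟨fun i hh1 hh2 => ?_, fun i h => ?_⟩
    · simp [Pi.smul_apply, Complex.real_smul, h1 i hh1 hh2]
    · simp only [Pi.smul_apply, Complex.real_smul, _root_.map_mul, Complex.conj_ofReal, h2 i h]; ring

noncomputable def psiL (n : ℕ) : (Fin n → ℂ) →ₗ[ℝ] ℝ where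
  toFun d := (∑ i, d i).im
  map_add' a b := by simp [Finset.sum_add_distrib]
  map_smul' c a := by
    simp [Pi.smul_apply, Complex.real_smul, ← Finset.mul_sum]

noncomputable def eL (p q r : ℕ) : (Fin (p + q) → ℝ) →ₗ[ℝ] (Fin (p + q) → ℂ) where
  toFun v := fun i => if (i : ℕ) < r then (v i : ℂ) + Complex.I * (v (Fin.rev i) : ℂ)
    else if (i : ℕ) < p + q - r then Complex.I * (v i : ℂ)
    else -(v (Fin.rev i) : ℂ) + Complex.I * (v i : ℂ)
  map_add' a b := by
    funext i
    by_cases h1 : (i : ℕ) < r <;> by_cases h2 : (i : ℕ) < p + q - r <;>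
      simp only [Pi.add_apply, h1, h2, if_true, if_false] <;> push_cast <;> ring
  map_smul' c a := by
    funext i
    by_cases h1 : (i : ℕ) < r <;> by_cases h2 : (i : ℕ) < p + q - r <;>
      simp only [Pi.smul_apply, smul_eq_mul, Complex.real_smul, h1, h2, if_true, if_false,
        RingHom.id_apply] <;> push_cast <;> ring

lemma eL_inj (p q r : ℕ) (h2r : 2 * r ≤ p + q) : Function.Injective (eL p q r) := by
  have : Function.LeftInverse
      (fun (d : Fin (p + q) → ℂ) (i : Fin (p + q)) =>
        if (i : ℕ) < r then (d i).re else (d i).im) (eL p q r) := by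
    intro v; funext i
    by_cases h1 : (i : ℕ) < r
    · simp [eL, h1]
    · by_cases h2 : (i : ℕ) < p + q - r <;> simp [eL, h1, h2]
  exact this.injective

lemma range_eL (p q r : ℕ) (h2r : 2 * r ≤ p + q) :
    LinearMap.range (eL p q r) = D0 p q r := by
  apply le_antisymm
  · rintro _ ⟨v, rfl⟩
    constructor
    · intro i hi1 hi2
      have h1 : ¬ (i : ℕ) < r := by omega
      simp [eL, h1, hi2]
    · intro i hi
      have h1 : ¬ (i : ℕ) < r := by have := i.isLt; omega
      have h2 : ¬ (i : ℕ) < p + q - r := by omega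
      have h3 : (Fin.rev i : ℕ) < r := by
        have := Fin.val_rev i; have := i.isLt; omega
      simp only [eL, LinearMap.coe_mk, AddHom.coe_mk, h1, h2, h3, if_true, if_false,
        Fin.rev_rev]
      simp only [map_add, _root_.map_mul, Complex.conj_ofReal, Complex.conj_I]
      ring
  · rintro d ⟨hd1, hd2⟩
    refine ⟨fun i => if (i : ℕ) < r then (d i).re else (d i).im, funext fun i => ?_⟩
    by_cases h1 : (i : ℕ) < r
    · have h3 : ¬ ((Fin.rev i : ℕ) < r) := by
        have := Fin.val_rev i; have := i.isLt; omega
      have h4 : p + q - r ≤ (Fin.rev i : ℕ) := by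
        have := Fin.val_rev i; have := i.isLt; omega
      have := hd2 (Fin.rev i) h4
      rw [Fin.rev_rev] at this
      simp only [eL, LinearMap.coe_mk, AddHom.coe_mk, h1, h3, if_true, if_false, this]
      simp [Complex.ext_iff]
    · by_cases h2 : (i : ℕ) < p + q - r
      · have hre := hd1 i (by omega) h2
        simp [eL, h1, h2, Complex.ext_iff, hre]
      · have h3 : (Fin.rev i : ℕ) < r := by
          have := Fin.val_rev i; have := i.isLt; omega
        have := hd2 i (by omega)
        simp only [eL, LinearMap.coe_mk, AddHom.coe_mk, h1, h2, h3, if_true, if_false, this]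
        simp [Complex.ext_iff]

set_option synthInstance.maxHeartbeats 1000000 in
set_option maxHeartbeats 1000000 in
lemma finrank_Dm (p q r : ℕ) (hr1 : 1 ≤ r) (hrp : r ≤ p) (hrq : r ≤ q) (hn : 3 ≤ p + q) :
    Module.finrank ℝ ↥(D0 p q r ⊓ LinearMap.ker (psiL (p + q))) = p + q - 1 := by
  have h2r : 2 * r ≤ p + q := by omega
  have hD0 : Module.finrank ℝ ↥(D0 p q r) = p + q := by
    rw [← range_eL p q r h2r, LinearMap.finrank_range_of_inj (eL_inj p q r h2r),
      Module.finrank_fin_fun]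
  set ψ' : ↥(D0 p q r) →ₗ[ℝ] ℝ := (psiL (p + q)).comp (D0 p q r).subtype with hψ'
  have hker : Submodule.map (D0 p q r).subtype (LinearMap.ker ψ')
      = D0 p q r ⊓ LinearMap.ker (psiL (p + q)) := by
    rw [hψ', LinearMap.ker_comp, Submodule.map_comap_subtype]
  have hfin : Module.finrank ℝ ↥(D0 p q r ⊓ LinearMap.ker (psiL (p + q)))
      = Module.finrank ℝ ↥(LinearMap.ker ψ') := by
    rw [← hker]
    exact ((Submodule.equivMapOfInjective _ (Submodule.injective_subtype _)
      (LinearMap.ker ψ')).symm.finrank_eq)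
  -- the element d₀
  set d₀ : Fin (p + q) → ℂ :=
    (fun i => if (i : ℕ) = 0 ∨ (i : ℕ) = p + q - 1 then Complex.I else 0) with hd₀
  have hd₀mem : d₀ ∈ D0 p q r := by
    constructor
    · intro i hi1 hi2
      have e1 : ¬ ((i : ℕ) = 0 ∨ (i : ℕ) = p + q - 1) := by omega
      simp [hd₀, e1]
    · intro i hi
      have hrev := Fin.val_rev i
      have hlt := i.isLt
      by_cases hc : (i : ℕ) = p + q - 1
      · have e1 : ((i : ℕ) = 0 ∨ (i : ℕ) = p + q - 1) := Or.inr hc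
        have e2 : ((Fin.rev i : ℕ) = 0 ∨ (Fin.rev i : ℕ) = p + q - 1) := by omega
        simp only [hd₀]
        rw [if_pos e1, if_pos e2, Complex.conj_I]
        ring
      · have e1 : ¬ ((i : ℕ) = 0 ∨ (i : ℕ) = p + q - 1) := by omega
        have e2 : ¬ ((Fin.rev i : ℕ) = 0 ∨ (Fin.rev i : ℕ) = p + q - 1) := by omega
        simp only [hd₀]
        rw [if_neg e1, if_neg e2]
        simp
  have hpsi : psiL (p + q) d₀ = 2 := by
    have hsum : ∑ i, d₀ i = 2 * Complex.I := by
      have hsplit : ∀ i : Fin (p + q), d₀ i =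
          (if i = (⟨0, by omega⟩ : Fin (p + q)) then Complex.I else 0)
          + (if i = (⟨p + q - 1, by omega⟩ : Fin (p + q)) then Complex.I else 0) := by
        intro i
        by_cases hc0 : (i : ℕ) = 0 <;> by_cases hc1 : (i : ℕ) = p + q - 1
        · omega
        · have heq : i = (⟨0, by omega⟩ : Fin (p + q)) := Fin.ext hc0
          have h2 : ¬ i = (⟨p + q - 1, by omega⟩ : Fin (p + q)) := by
            intro h; rw [h] at hc1; exact hc1 rfl
          simp only [hd₀]
          rw [if_pos (Or.inl hc0), if_pos heq, if_neg h2, add_zero]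
        · have heq : i = (⟨p + q - 1, by omega⟩ : Fin (p + q)) := Fin.ext hc1
          have h2 : ¬ i = (⟨0, by omega⟩ : Fin (p + q)) := by
            intro h; rw [h] at hc0; exact hc0 rfl
          simp only [hd₀]
          rw [if_pos (Or.inr hc1), if_neg h2, if_pos heq, zero_add]
        · have h2 : ¬ i = (⟨0, by omega⟩ : Fin (p + q)) := by
            intro h; rw [h] at hc0; exact hc0 rfl
          have h3 : ¬ i = (⟨p + q - 1, by omega⟩ : Fin (p + q)) := by
            intro h; rw [h] at hc1; exact hc1 rfl
          simp only [hd₀]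
          rw [if_neg (by push_neg; exact ⟨hc0, hc1⟩), if_neg h2, if_neg h3, add_zero]
      rw [Finset.sum_congr rfl (fun i _ => hsplit i), Finset.sum_add_distrib,
        Finset.sum_ite_eq' Finset.univ, Finset.sum_ite_eq' Finset.univ]
      simp; ring
    simp only [psiL, LinearMap.coe_mk, AddHom.coe_mk, hsum]
    simp
  have hsurj : Function.Surjective ψ' := by
    intro c
    refine ⟨(c / 2) • ⟨d₀, hd₀mem⟩, ?_⟩
    rw [_root_.map_smul]
    have hv : ψ' ⟨d₀, hd₀mem⟩ = 2 := hpsi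
    rw [hv]; simp
  have hrange : LinearMap.range ψ' = ⊤ := LinearMap.range_eq_top.mpr hsurj
  have := LinearMap.finrank_range_add_finrank_ker ψ'
  rw [hrange, hD0] at this
  rw [hfin]
  have h1 : Module.finrank ℝ ↥(⊤ : Submodule ℝ ℝ) = 1 := by
    rw [finrank_top]; exact Module.finrank_self ℝ
  omega

lemma key (p q r : ℕ) (hr1 : 1 ≤ r) (hrp : r ≤ p) (hrq : r ≤ q) (hn : 3 ≤ p + q)
    (lam : Fin (p + q) → ℂ) (hinj : Function.Injective lam)
    (hcomplex : ∀ i : Fin (p + q), (i : ℕ) < r →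
      (lam i).im ≠ 0 ∧ lam (Fin.rev i) = (starRingEnd ℂ) (lam i)) :
    {A : Matrix (Fin (p + q)) (Fin (p + q)) ℂ |
        (Matrix.trace A = 0 ∧ Aᴴ * Tpqr p q r + Tpqr p q r * A = 0) ∧
        ∃ c : ℝ, A * Matrix.diagonal lam - Matrix.diagonal lam * A = c • Matrix.diagonal lam}
    = {A | ∃ (z : Fin (p + q) → ℂ) (x : Fin (p + q) → ℝ),
        (2 * (∑ i ∈ Finset.univ.filter (fun i : Fin (p + q) => (i : ℕ) < r), (z i).im)
          + ∑ i ∈ Finset.univ.filter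
              (fun i : Fin (p + q) => r ≤ (i : ℕ) ∧ (i : ℕ) < p + q - r), x i) = 0 ∧
        A = Matrix.diagonal (dvec p q r z x)} := by
  have h2r : 2 * r ≤ p + q := by omega
  ext A
  simp only [Set.mem_setOf_eq]
  constructor
  · rintro ⟨⟨htr, hT⟩, c, hc⟩
    set i0 : Fin (p + q) := ⟨0, by omega⟩ with hi0
    have hlam0 : lam i0 ≠ 0 := fun h =>
      (hcomplex i0 (by simp [hi0]; omega)).1 (by rw [h]; rfl)
    have hc0 : c = 0 := by
      have h1 : A i0 i0 * lam i0 - lam i0 * A i0 i0 = (c : ℂ) * lam i0 := by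
        have h2 := congrFun (congrFun hc i0) i0
        simpa [Matrix.sub_apply, Matrix.mul_diagonal, Matrix.diagonal_mul,
          Matrix.smul_apply, Matrix.diagonal_apply_eq, Complex.real_smul] using h2
      have h3 : (c : ℂ) * lam i0 = 0 := by rw [← h1]; ring
      rcases mul_eq_zero.mp h3 with h | h
      · exact_mod_cast h
      · exact absurd h hlam0
    have hdiag : ∀ i j : Fin (p + q), i ≠ j → A i j = 0 := by
      intro i j hij
      have h2 := congrFun (congrFun hc i) j
      rw [hc0] at h2
      simp only [Matrix.sub_apply, Matrix.mul_diagonal, Matrix.diagonal_mul,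
        Matrix.smul_apply, Matrix.diagonal_apply_ne _ hij, Complex.ofReal_zero,
        Complex.real_smul, zero_mul, zero_smul] at h2
      have h3 : A i j * (lam j - lam i) = 0 := by linear_combination h2
      rcases mul_eq_zero.mp h3 with h | h
      · exact h
      · exact absurd (hinj (sub_eq_zero.mp h)).symm hij
    have hA : A = Matrix.diagonal (fun i => A i i) := by
      ext i j
      by_cases hij : i = j
      · subst hij; simp [Matrix.diagonal_apply_eq]
      · rw [Matrix.diagonal_apply_ne _ hij]; exact hdiag i j hij
    have hTe : ∀ i j : Fin (p + q),
        (starRingEnd ℂ) (A i i) * Tpqr p q r i j + Tpqr p q r i j * A j j = 0 := by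
      intro i j
      have h2 := congrFun (congrFun hT i) j
      rw [Matrix.add_apply, Matrix.mul_apply, Matrix.mul_apply, Matrix.zero_apply] at h2
      rw [Finset.sum_eq_single i (fun b _ hb => by
            rw [Matrix.conjTranspose_apply, hdiag b i hb, star_zero, zero_mul])
          (fun h => absurd (Finset.mem_univ i) h),
        Finset.sum_eq_single j (fun b _ hb => by
            rw [hdiag b j hb, mul_zero])
          (fun h => absurd (Finset.mem_univ j) h)] at h2
      rw [Matrix.conjTranspose_apply] at h2
      exact h2
    have hmid : ∀ i : Fin (p + q), ¬ (i : ℕ) < r → (i : ℕ) < p + q - r →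
        (A i i).re = 0 := by
      intro i h1 h2
      have h3 := hTe i i
      have hTii : Tpqr p q r i i = (if (i : ℕ) < p then 1 else -1) := by
        simp only [Tpqr, Matrix.of_apply]
        rw [if_neg (by omega), if_pos trivial]
      rw [hTii] at h3
      have hkey : (starRingEnd ℂ) (A i i) + A i i = 0 := by
        by_cases hp' : (i : ℕ) < p
        · simpa [hp'] using h3
        · simp only [hp', if_false] at h3; linear_combination -h3
      have hre := congrArg Complex.re hkey
      simp only [Complex.add_re, Complex.conj_re, Complex.zero_re] at hre
      linarith
    have hbig : ∀ i : Fin (p + q), p + q - r ≤ (i : ℕ) →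
        A i i = -(starRingEnd ℂ) (A (Fin.rev i) (Fin.rev i)) := by
      intro i hi
      have hj : (Fin.rev i : ℕ) < r := by
        have := Fin.val_rev i; have := i.isLt; omega
      have hTji : Tpqr p q r (Fin.rev i) i = 1 := by
        simp only [Tpqr, Matrix.of_apply]
        rw [if_pos (Or.inl hj), if_pos (by
          have := Fin.val_rev i; have := i.isLt; omega)]
      have h3 := hTe (Fin.rev i) i
      rw [hTji] at h3
      linear_combination h3
    have hfun : (fun i : Fin (p + q) => A i i)
        = dvec p q r (fun i => A i i) (fun i => (A i i).im) := by
      funext i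
      by_cases h1 : (i : ℕ) < r
      · simp [dvec, h1]
      · by_cases h2 : (i : ℕ) < p + q - r
        · simp only [dvec, h1, h2, if_false, if_true]
          have hre := hmid i h1 h2
          apply Complex.ext <;> simp [hre]
        · simp only [dvec, h1, h2, if_false]
          exact hbig i (by omega)
    refine ⟨fun i => A i i, fun i => (A i i).im, ?_,
      hA.trans (congrArg Matrix.diagonal hfun)⟩
    have htr2 : ∑ i, A i i = 0 := htr
    have hsum_eq : ∑ i, A i i = ∑ i, dvec p q r (fun i => A i i) (fun i => (A i i).im) i :=
      Finset.sum_congr rfl fun i _ => congrFun hfun i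
    have h4 := sum_dvec (r := r) hrp hrq (fun i => A i i) (fun i => (A i i).im)
    have h5 := h4.symm.trans (hsum_eq.symm.trans htr2)
    rcases mul_eq_zero.mp h5 with h | h
    · exact absurd h Complex.I_ne_zero
    · exact_mod_cast h
  · rintro ⟨z, x, hzx, rfl⟩
    refine ⟨⟨?_, ?_⟩, 0, ?_⟩
    · rw [Matrix.trace_diagonal, sum_dvec hrp hrq z x, hzx]
      simp
    · rw [Matrix.diagonal_conjTranspose]
      ext i j
      rw [Matrix.add_apply, Matrix.diagonal_mul, Matrix.mul_diagonal, Matrix.zero_apply,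
        Pi.star_apply]
      by_cases hg : (i : ℕ) < r ∨ p + q - r ≤ (i : ℕ)
      · by_cases hd : (i : ℕ) + (j : ℕ) = p + q - 1
        · have hj : j = Fin.rev i := by
            apply Fin.ext; rw [Fin.val_rev]; have := i.isLt; have := j.isLt; omega
          subst hj
          have hTij : Tpqr p q r i (Fin.rev i) = 1 := by
            simp only [Tpqr, Matrix.of_apply]; rw [if_pos hg, if_pos hd]
          rw [hTij]
          rcases hg with h | h
          · have h1 : ¬ (Fin.rev i : ℕ) < r := by
              have := Fin.val_rev i; have := i.isLt; omega
            have h2 : ¬ (Fin.rev i : ℕ) < p + q - r := by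
              have := Fin.val_rev i; have := i.isLt; omega
            simp only [dvec, h, if_true, h1, h2, if_false, Fin.rev_rev]
            simp only [Complex.star_def]
            ring
          · have h1 : ¬ (i : ℕ) < r := by omega
            have h2 : ¬ (i : ℕ) < p + q - r := by omega
            have h3 : (Fin.rev i : ℕ) < r := by
              have := Fin.val_rev i; have := i.isLt; omega
            simp only [dvec, h1, h2, h3, if_false, if_true]
            simp only [Complex.star_def, map_neg, Complex.conj_conj]
            ring
        · have hTij : Tpqr p q r i j = 0 := by
            simp only [Tpqr, Matrix.of_apply]; rw [if_pos hg, if_neg hd]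
          rw [hTij]; ring
      · have h1 : ¬ (i : ℕ) < r := fun h => hg (Or.inl h)
        have h2 : ¬ p + q - r ≤ (i : ℕ) := fun h => hg (Or.inr h)
        by_cases hji : j = i
        · subst hji
          have hTii : Tpqr p q r j j = (if (j : ℕ) < p then 1 else -1) := by
            simp only [Tpqr, Matrix.of_apply]
            rw [if_neg (by omega), if_pos trivial]
          rw [hTii]
          simp only [dvec, h1, if_false, if_pos (show (j : ℕ) < p + q - r by omega)]
          by_cases hp' : (j : ℕ) < p <;>
            simp only [hp', if_true, if_false, Complex.star_def, _root_.map_mul,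
              Complex.conj_I, Complex.conj_ofReal] <;> ring
        · have hTij : Tpqr p q r i j = 0 := by
            simp only [Tpqr, Matrix.of_apply]
            rw [if_neg (by omega), if_neg hji]
          rw [hTij]; ring
    · rw [Matrix.diagonal_mul_diagonal, Matrix.diagonal_mul_diagonal, zero_smul,
        sub_eq_zero]
      have hcm : (fun i => dvec p q r z x i * lam i)
          = fun i => lam i * dvec p q r z x i := funext fun i => mul_comm _ _
      rw [hcm]

lemma rhs_eq_map (p q r : ℕ) (hr1 : 1 ≤ r) (hrp : r ≤ p) (hrq : r ≤ q) (hn : 3 ≤ p + q) :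
    {A : Matrix (Fin (p + q)) (Fin (p + q)) ℂ | ∃ (z : Fin (p + q) → ℂ) (x : Fin (p + q) → ℝ),
        (2 * (∑ i ∈ Finset.univ.filter (fun i : Fin (p + q) => (i : ℕ) < r), (z i).im)
          + ∑ i ∈ Finset.univ.filter
              (fun i : Fin (p + q) => r ≤ (i : ℕ) ∧ (i : ℕ) < p + q - r), x i) = 0 ∧
        A = Matrix.diagonal (dvec p q r z x)}
    = ↑(Submodule.map (diagL (p + q)) (D0 p q r ⊓ LinearMap.ker (psiL (p + q)))) := by
  have h2r : 2 * r ≤ p + q := by omega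
  ext A
  simp only [Set.mem_setOf_eq, SetLike.mem_coe, Submodule.mem_map, Submodule.mem_inf,
    LinearMap.mem_ker]
  constructor
  · rintro ⟨z, x, hzx, rfl⟩
    refine ⟨dvec p q r z x, ⟨⟨?_, ?_⟩, ?_⟩, rfl⟩
    · intro i hi1 hi2
      have h1 : ¬ (i : ℕ) < r := by omega
      simp [dvec, h1, hi2]
    · intro i hi
      have h1 : ¬ (i : ℕ) < r := by omega
      have h2 : ¬ (i : ℕ) < p + q - r := by omega
      have h3 : p + q - ((i : ℕ) + 1) < r := by have := i.isLt; omega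
      simp [dvec, h1, h2, h3]
    · show (∑ i, dvec p q r z x i).im = 0
      rw [sum_dvec hrp hrq z x]
      simp [hzx]
  · rintro ⟨d, ⟨⟨hd1, hd2⟩, hdk⟩, rfl⟩
    have hfun : dvec p q r d (fun i => (d i).im) = d := by
      funext i
      by_cases h1 : (i : ℕ) < r
      · simp [dvec, h1]
      · by_cases h2 : (i : ℕ) < p + q - r
        · have hre := hd1 i (by omega) h2
          simp only [dvec, h1, h2, if_false, if_true]
          apply Complex.ext <;> simp [hre]
        · simp only [dvec, h1, h2, if_false]
          exact (hd2 i (by omega)).symm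
    refine ⟨d, fun i => (d i).im, ?_, (congrArg Matrix.diagonal hfun).symm⟩
    have h4 := sum_dvec (r := r) hrp hrq d (fun i => (d i).im)
    rw [hfun] at h4
    have h6 := congrArg Complex.im h4
    simp only [Complex.mul_im, Complex.I_re, Complex.I_im, Complex.ofReal_re,
      Complex.ofReal_im, zero_mul, one_mul, mul_zero, add_zero, zero_add] at h6
    have hdk2 : (∑ i, d i).im = 0 := hdk
    rw [hdk2] at h6
    linarith

end Stmt3Aux

open Stmt3Aux in
set_option synthInstance.maxHeartbeats 1000000 in
set_option maxHeartbeats 1000000 in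
/-- For `S = diag(λ₁,…,λₙ)` with the `λᵢ` pairwise distinct, non-real with
`λ_{n+1-i} = conj(λᵢ)` for `i ≤ r`, and real for `r < i ≤ n-r`, the stabilizer
`{X ∈ 𝔥_T : ∃ c ∈ ℝ, [X,S] = c·S}` consists exactly of the diagonal matrices
`diag(z₁,…,z_r, ix₁,…,ix_{n-2r}, -conj(z_r),…,-conj(z₁))` with
`2·Σ Im zᵢ + Σ xⱼ = 0`; in particular it is a real vector space of dimension `n - 1`
invariant under conjugate transposition. -/
theorem stmt3 (p q r : ℕ) (hp : 1 ≤ p) (hq : 1 ≤ q) (hn : 3 ≤ p + q)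
    (hr1 : 1 ≤ r) (hrp : r ≤ p) (hrq : r ≤ q)
    (lam : Fin (p + q) → ℂ) (hinj : Function.Injective lam)
    (hcomplex : ∀ i : Fin (p + q), (i : ℕ) < r →
      (lam i).im ≠ 0 ∧ lam (Fin.rev i) = (starRingEnd ℂ) (lam i))
    (hreal : ∀ i : Fin (p + q), r ≤ (i : ℕ) → (i : ℕ) < p + q - r → (lam i).im = 0)
    (S : Matrix (Fin (p + q)) (Fin (p + q)) ℂ) (hS : S = Matrix.diagonal lam)
    (bset : Set (Matrix (Fin (p + q)) (Fin (p + q)) ℂ))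
    (hbset : bset = {A | (Matrix.trace A = 0 ∧ Aᴴ * Tpqr p q r + Tpqr p q r * A = 0) ∧
      ∃ c : ℝ, A * S - S * A = c • S}) :
    bset = {A | ∃ (z : Fin (p + q) → ℂ) (x : Fin (p + q) → ℝ),
        (2 * (∑ i ∈ Finset.univ.filter (fun i : Fin (p + q) => (i : ℕ) < r), (z i).im)
          + ∑ i ∈ Finset.univ.filter
              (fun i : Fin (p + q) => r ≤ (i : ℕ) ∧ (i : ℕ) < p + q - r), x i) = 0 ∧
        A = Matrix.diagonal (fun i : Fin (p + q) => if (i : ℕ) < r then z i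
            else if (i : ℕ) < p + q - r then Complex.I * (x i : ℂ)
            else -(starRingEnd ℂ) (z (Fin.rev i)))} ∧
    Module.finrank ℝ ↥(Submodule.span ℝ bset) = p + q - 1 ∧
    (∀ A ∈ bset, Aᴴ ∈ bset) := by
  have h2r : 2 * r ≤ p + q := by omega
  subst hS hbset
  have hkey := key p q r hr1 hrp hrq hn lam hinj hcomplex
  refine ⟨hkey, ?_, ?_⟩
  · have hmap := rhs_eq_map p q r hr1 hrp hrq hn
    rw [hkey, hmap, Submodule.span_eq]
    rw [(Submodule.equivMapOfInjective (diagL (p + q)) (diagL_inj (p + q))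
      (D0 p q r ⊓ LinearMap.ker (psiL (p + q)))).symm.finrank_eq]
    exact finrank_Dm p q r hr1 hrp hrq hn
  · intro A hA
    rw [hkey] at hA ⊢
    obtain ⟨z, x, hzx, rfl⟩ := hA
    refine ⟨fun i => (starRingEnd ℂ) (z i), fun i => -(x i), ?_, ?_⟩
    · simp only [Complex.conj_im]
      rw [Finset.sum_neg_distrib, Finset.sum_neg_distrib]
      linarith [hzx]
    · rw [Matrix.diagonal_conjTranspose]
      refine congrArg Matrix.diagonal (funext fun i => ?_)
      by_cases h1 : (i : ℕ) < r
      · simp [dvec, h1, Complex.star_def]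
      · by_cases h2 : (i : ℕ) < p + q - r
        · simp only [dvec, Pi.star_apply, h1, h2, if_false, if_true, Complex.star_def,
            _root_.map_mul, Complex.conj_I, Complex.conj_ofReal]
          push_cast
          ring
        · simp only [dvec, Pi.star_apply, h1, h2, if_false, Complex.star_def, map_neg,
            Complex.conj_conj]
end

section
/- Let S ∈ 𝔪 satisfy tr(S²) = 0 and suppose the characteristic polynomial of S (regarded as a polynomial over ℂ) has n distinct roots in ℂ. Then {X ∈ 𝔰𝔬(p,q) : there exists c ∈ ℝ with X·S − S·X = c·S} = {0}. -/
open Matrix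

/-- The diagonal matrix `I_{p,q}` with `p` ones followed by `q` minus-ones, over `ℝ`. -/
noncomputable def IpqR (p q : ℕ) : Matrix (Fin (p + q)) (Fin (p + q)) ℝ :=
  Matrix.diagonal (fun i => if (i : ℕ) < p then (1 : ℝ) else -1)

lemma eval_charpoly_det {n : ℕ} (M : Matrix (Fin n) (Fin n) ℂ) (μ : ℂ) :
    M.charpoly.eval μ = (Matrix.diagonal (fun _ => μ) - M).det := by
  rw [Matrix.charpoly, ← Polynomial.coe_evalRingHom, RingHom.map_det]
  congr 1
  ext i j
  by_cases h : i = j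
  · subst h
    simp [Matrix.charmatrix_apply_eq, Matrix.sub_apply]
  · simp [Matrix.charmatrix_apply_ne _ _ _ h, Matrix.sub_apply, Matrix.diagonal_apply_ne _ h]

/-- If `S ∈ 𝔪 ⊂ Mat_n(ℝ)` satisfies `tr(S²) = 0` and its characteristic
polynomial (over `ℂ`) has `n` distinct roots, then
`{X ∈ 𝔰𝔬(p,q) : ∃ c ∈ ℝ, X·S − S·X = c·S} = {0}`. -/
theorem stmt6 (p q : ℕ) (hp : 1 ≤ p) (hq : 1 ≤ q) (hn : 3 ≤ p + q)
    (S : Matrix (Fin (p + q)) (Fin (p + q)) ℝ)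
    (hStr : Matrix.trace S = 0)
    (hSm : Sᵀ * IpqR p q = IpqR p q * S)
    (hSnull : Matrix.trace (S * S) = 0)
    (hdist : ∃ lam : Fin (p + q) → ℂ, Function.Injective lam ∧
      Polynomial.map (algebraMap ℝ ℂ) S.charpoly
        = ∏ i, (Polynomial.X - Polynomial.C (lam i))) :
    {X : Matrix (Fin (p + q)) (Fin (p + q)) ℝ |
        (Xᵀ * IpqR p q + IpqR p q * X = 0) ∧
        ∃ c : ℝ, X * S - S * X = c • S} = {0} := by
  obtain ⟨lam, hinj, hfac⟩ := hdist
  ext X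
  simp only [Set.mem_setOf_eq, Set.mem_singleton_iff]
  constructor
  swap
  · rintro rfl
    exact ⟨by simp, 0, by simp⟩
  rintro ⟨hXm, c, hXc⟩
  set f := (algebraMap ℝ ℂ) with hf
  set J : Matrix (Fin (p + q)) (Fin (p + q)) ℂ := (IpqR p q).map f with hJ
  set Sc : Matrix (Fin (p + q)) (Fin (p + q)) ℂ := S.map f with hSc
  set Xc : Matrix (Fin (p + q)) (Fin (p + q)) ℂ := X.map f with hXcdef
  have hmapmul : ∀ A B : Matrix (Fin (p + q)) (Fin (p + q)) ℝ,
      (A * B).map f = A.map f * B.map f := by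
    intro A B; exact Matrix.map_mul
  have hmapT : ∀ A : Matrix (Fin (p + q)) (Fin (p + q)) ℝ, (Aᵀ).map f = (A.map f)ᵀ := by
    intro A; rfl
  have hmapneg : ∀ A : Matrix (Fin (p + q)) (Fin (p + q)) ℝ, (-A).map f = -(A.map f) := by
    intro A; ext i j; simp [Matrix.map_apply]
  have hmapsmul : ∀ (r : ℝ) (A : Matrix (Fin (p + q)) (Fin (p + q)) ℝ),
      (r • A).map f = (r : ℂ) • A.map f := by
    intro r A; ext i j; simp [Matrix.map_apply, hf]
  -- J facts
  have hII : IpqR p q * IpqR p q = 1 := by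
    rw [IpqR, Matrix.diagonal_mul_diagonal]
    have : (fun i : Fin (p + q) =>
        (if (i : ℕ) < p then (1:ℝ) else -1) * (if (i : ℕ) < p then (1:ℝ) else -1))
        = fun _ => 1 := by
      funext i; by_cases h : (i : ℕ) < p <;> simp [h]
    rw [this, Matrix.diagonal_one]
  have hJJ : J * J = 1 := by
    rw [hJ, ← hmapmul, hII]
    simp
  have hJT : Jᵀ = J := by
    rw [hJ, ← hmapT]
    congr 1
    rw [IpqR, Matrix.diagonal_transpose]
  have hScJ : Scᵀ * J = J * Sc := by
    rw [hSc, hJ, ← hmapT, ← hmapmul, ← hmapmul, hSm]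
  have hXcJ : Xcᵀ * J = -(J * Xc) := by
    have h1 : Xᵀ * IpqR p q = -(IpqR p q * X) := by
      rw [← add_eq_zero_iff_eq_neg]; exact hXm
    rw [hXcdef, hJ, ← hmapT, ← hmapmul, h1, hmapneg, hmapmul]
  have hcomm : Xc * Sc - Sc * Xc = (c : ℂ) • Sc := by
    have h2 := congrArg (fun M => M.map f) hXc
    rw [Matrix.map_sub _ (fun a b => map_sub f a b), hmapmul, hmapmul, hmapsmul] at h2
    exact h2
  -- bilinear form facts
  have hBadj : ∀ (A : Matrix (Fin (p + q)) (Fin (p + q)) ℂ) (u w : Fin (p + q) → ℂ),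
      (A *ᵥ u) ⬝ᵥ (J *ᵥ w) = u ⬝ᵥ ((Aᵀ * J) *ᵥ w) := by
    intro A u w
    rw [Matrix.dotProduct_mulVec, ← Matrix.vecMul_transpose, Matrix.vecMul_vecMul,
      ← Matrix.dotProduct_mulVec]
  have hBS : ∀ u w, (Sc *ᵥ u) ⬝ᵥ (J *ᵥ w) = u ⬝ᵥ (J *ᵥ (Sc *ᵥ w)) := by
    intro u w
    rw [hBadj, hScJ, ← Matrix.mulVec_mulVec]
  have hBX : ∀ u w, (Xc *ᵥ u) ⬝ᵥ (J *ᵥ w) = -(u ⬝ᵥ (J *ᵥ (Xc *ᵥ w))) := by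
    intro u w
    rw [hBadj, hXcJ, Matrix.neg_mulVec, dotProduct_neg, ← Matrix.mulVec_mulVec]
  have hBsymm : ∀ u w, u ⬝ᵥ (J *ᵥ w) = w ⬝ᵥ (J *ᵥ u) := by
    intro u w
    have h : u ᵥ* J = J *ᵥ u := by
      nth_rewrite 1 [← hJT]
      exact Matrix.vecMul_transpose J u
    rw [Matrix.dotProduct_mulVec, h, dotProduct_comm]
  -- eigenvectors
  have hSccp : Sc.charpoly = ∏ i, (Polynomial.X - Polynomial.C (lam i)) := by
    rw [hSc, Matrix.charpoly_map]
    exact hfac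
  have hev : ∀ i, ∃ v : Fin (p + q) → ℂ, v ≠ 0 ∧ Sc *ᵥ v = lam i • v := by
    intro i
    have hdet : (Matrix.diagonal (fun _ => lam i) - Sc).det = 0 := by
      rw [← eval_charpoly_det, hSccp]
      rw [Polynomial.eval_prod]
      exact Finset.prod_eq_zero (Finset.mem_univ i) (by simp)
    obtain ⟨v, hv0, hv⟩ := (Matrix.exists_mulVec_eq_zero_iff).2 hdet
    refine ⟨v, hv0, ?_⟩
    rw [Matrix.sub_mulVec, sub_eq_zero] at hv
    rw [← hv]
    funext k
    simp [Matrix.mulVec_diagonal]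
  choose v hv0 hveq using hev
  -- basis
  have hli : LinearIndependent ℂ v := by
    apply Module.End.eigenvectors_linearIndependent' (Matrix.mulVecLin Sc) lam hinj v
    intro i
    refine ⟨Module.End.mem_eigenspace_iff.mpr ?_, hv0 i⟩
    simpa using hveq i
  have hNE : Nonempty (Fin (p + q)) := ⟨⟨0, by omega⟩⟩
  have hcard : Fintype.card (Fin (p + q)) = Module.finrank ℂ (Fin (p + q) → ℂ) := by simp
  let b : Module.Basis (Fin (p + q)) ℂ (Fin (p + q) → ℂ) :=
    basisOfLinearIndependentOfCardEqFinrank hli hcard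
  have hb : ∀ i, b i = v i := fun i => by
    simp [b, coe_basisOfLinearIndependentOfCardEqFinrank]
  -- nondegeneracy
  have hnd : ∀ w : Fin (p + q) → ℂ, (∀ i, v i ⬝ᵥ (J *ᵥ w) = 0) → w = 0 := by
    intro w hw
    have hall : ∀ u : Fin (p + q) → ℂ, u ⬝ᵥ (J *ᵥ w) = 0 := by
      let l : (Fin (p + q) → ℂ) →ₗ[ℂ] ℂ :=
        { toFun := fun u => u ⬝ᵥ (J *ᵥ w)
          map_add' := fun x y => add_dotProduct x y _
          map_smul' := fun r x => smul_dotProduct r x _ }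
      have hl : l = 0 := b.ext fun i => by simp [l, hb, hw]
      intro u
      have h3 := congrFun (congrArg
        (fun (m : (Fin (p + q) → ℂ) →ₗ[ℂ] ℂ) => (m : (Fin (p + q) → ℂ) → ℂ)) hl) u
      simpa [l] using h3
    have hJw : J *ᵥ w = 0 := by
      funext k
      have h4 := hall (Pi.single k 1)
      simpa [single_dotProduct] using h4
    have h5 := congrArg (fun z => J *ᵥ z) hJw
    simpa [Matrix.mulVec_mulVec, hJJ] using h5
  -- orthogonality
  have horth : ∀ (i : Fin (p + q)) (w : Fin (p + q) → ℂ) (μ : ℂ),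
      Sc *ᵥ w = μ • w → lam i ≠ μ → v i ⬝ᵥ (J *ᵥ w) = 0 := by
    intro i w μ hw hne
    have h1 := hBS (v i) w
    rw [hveq i, hw, smul_dotProduct, Matrix.mulVec_smul, dotProduct_smul] at h1
    have h2 : (lam i - μ) * (v i ⬝ᵥ (J *ᵥ w)) = 0 := by
      rw [sub_mul]
      rw [smul_eq_mul, smul_eq_mul] at h1
      rw [h1]; ring
    rcases mul_eq_zero.1 h2 with h | h
    · exact absurd (sub_eq_zero.1 h) hne
    · exact h
  have hBne : ∀ i, v i ⬝ᵥ (J *ᵥ v i) ≠ 0 := by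
    intro i hzero
    apply hv0 i
    apply hnd
    intro j
    by_cases h : j = i
    · subst h; exact hzero
    · exact horth j (v i) (lam i) (hveq i) (fun he => h (hinj he))
  -- c = 0
  have hex : ∃ i, lam i ≠ 0 := by
    by_contra h
    push_neg at h
    have h01 : lam ⟨0, by omega⟩ = lam ⟨1, by omega⟩ := by rw [h, h]
    have h02 := hinj h01
    simp [Fin.ext_iff] at h02
  obtain ⟨i0, hi0⟩ := hex
  have hc0 : (c : ℂ) = 0 := by
    have hrel : lam i0 • (Xc *ᵥ v i0) - Sc *ᵥ (Xc *ᵥ v i0)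
        = ((c : ℂ) * lam i0) • v i0 := by
      have h6 := congrArg (fun M => M *ᵥ v i0) hcomm
      simp only [Matrix.sub_mulVec, Matrix.smul_mulVec, ← Matrix.mulVec_mulVec] at h6
      rw [hveq i0, Matrix.mulVec_smul] at h6
      rw [h6, smul_smul]
    have hpair := congrArg (fun z => v i0 ⬝ᵥ (J *ᵥ z)) hrel
    simp only [Matrix.mulVec_sub, Matrix.mulVec_smul, dotProduct_sub,
      dotProduct_smul] at hpair
    have hzero : v i0 ⬝ᵥ (J *ᵥ (Sc *ᵥ (Xc *ᵥ v i0)))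
        = lam i0 * (v i0 ⬝ᵥ (J *ᵥ (Xc *ᵥ v i0))) := by
      rw [← hBS, hveq i0, smul_dotProduct, smul_eq_mul]
    rw [hzero] at hpair
    simp only [smul_eq_mul, sub_self] at hpair
    have h7 : ((c : ℂ) * lam i0) * (v i0 ⬝ᵥ (J *ᵥ v i0)) = 0 := hpair.symm
    rcases mul_eq_zero.1 h7 with h | h
    · rcases mul_eq_zero.1 h with h' | h'
      · exact h'
      · exact absurd h' hi0
    · exact absurd h (hBne i0)
  have hcomm0 : Xc * Sc = Sc * Xc := by
    rw [hc0, zero_smul, sub_eq_zero] at hcomm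
    exact hcomm
  -- X kills each eigenvector
  have hXv : ∀ i, Xc *ᵥ v i = 0 := by
    intro i
    have heig : Sc *ᵥ (Xc *ᵥ v i) = lam i • (Xc *ᵥ v i) := by
      rw [Matrix.mulVec_mulVec, ← hcomm0, ← Matrix.mulVec_mulVec, hveq i, Matrix.mulVec_smul]
    apply hnd
    intro j
    by_cases h : j = i
    · rw [h]
      have h1 := hBX (v i) (v i)
      have h2 := hBsymm (Xc *ᵥ v i) (v i)
      rw [h2] at h1
      have h8 : (2 : ℂ) * (v i ⬝ᵥ (J *ᵥ (Xc *ᵥ v i))) = 0 := by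
        rw [two_mul]
        nth_rewrite 1 [h1]
        ring
      rcases mul_eq_zero.1 h8 with h | h
      · norm_num at h
      · exact h
    · exact horth j (Xc *ᵥ v i) (lam i) heig (fun he => h (hinj he))
  -- Xc = 0
  have hXc0 : Xc = 0 := by
    have hl : Xc.mulVecLin = (0 : (Fin (p + q) → ℂ) →ₗ[ℂ] (Fin (p + q) → ℂ)) :=
      b.ext fun i => by simp [hb, hXv]
    ext i j
    have h9 := congrFun (congrArg
      (fun (m : (Fin (p + q) → ℂ) →ₗ[ℂ] (Fin (p + q) → ℂ)) => m (Pi.single j 1)) hl) i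
    simpa [Matrix.mulVec_single] using h9
  ext i j
  have h10 : f (X i j) = 0 := by
    have h11 := congrFun (congrFun (congrArg
      (fun (M : Matrix (Fin (p + q)) (Fin (p + q)) ℂ) => M) hXc0) i) j
    simpa [Matrix.map_apply, hXcdef] using h11
  simpa [hf] using h10
end

section
/- For all X, Y ∈ 𝔪 the number tr(X·Y) is real, and the symmetric real bilinear form B(X,Y) := Re(tr(X·Y)) on the real vector space 𝔪 is nondegenerate of signature (p² + q² − 1, 2pq): there exist real subspaces V₊ and V₋ of 𝔪 with 𝔪 = V₊ ⊕ V₋, B(v₊, v₋) = 0 for all v₊ ∈ V₊ and v₋ ∈ V₋, B positive definite on V₊, B negative definite on V₋, dim_ℝ V₊ = p² + q² − 1, and dim_ℝ V₋ = 2pq. -/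
open Matrix

open Matrix Complex

namespace Stmt11Aux

variable (p q : ℕ)

def eps (i : Fin (p + q)) : ℂ := if (i : ℕ) < p then 1 else -1

variable {p q}

lemma eps_mul_self (i : Fin (p + q)) : eps p q i * eps p q i = 1 := by
  unfold eps; split <;> ring

lemma conj_eps (i : Fin (p + q)) : (starRingEnd ℂ) (eps p q i) = eps p q i := by
  unfold eps; split <;> simp

lemma eps_mul_of_iff {i j : Fin (p + q)} (h : ((i : ℕ) < p ↔ (j : ℕ) < p)) :
    eps p q i * eps p q j = 1 := by
  unfold eps
  rcases Nat.lt_or_ge (i : ℕ) p with hi | hi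
  · rw [if_pos hi, if_pos (h.mp hi)]; ring
  · rw [if_neg (Nat.not_lt.2 hi), if_neg (fun hj => Nat.not_lt.2 hi (h.mpr hj))]; ring

lemma eps_mul_of_not_iff {i j : Fin (p + q)} (h : ¬ ((i : ℕ) < p ↔ (j : ℕ) < p)) :
    eps p q i * eps p q j = -1 := by
  unfold eps
  rcases Nat.lt_or_ge (i : ℕ) p with hi | hi
  · rw [if_pos hi, if_neg (fun hj => h ⟨fun _ => hj, fun _ => hi⟩)]; ring
  · rw [if_neg (Nat.not_lt.2 hi)]
    rw [if_pos ?_]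
    · ring
    · by_contra hj
      exact h ⟨fun h' => absurd h' (Nat.not_lt.2 hi), fun h' => absurd h' hj⟩

/-- The defining symmetry condition of `𝔪`, entrywise. -/
def cond (X : Matrix (Fin (p + q)) (Fin (p + q)) ℂ) : Prop :=
  ∀ i j, X i j = eps p q i * eps p q j * (starRingEnd ℂ) (X j i)

lemma mem_iff (X : Matrix (Fin (p + q)) (Fin (p + q)) ℂ) :
    (Matrix.trace X = 0 ∧ Xᴴ * Ipq p q = Ipq p q * X) ↔ Matrix.trace X = 0 ∧ cond X := by
  constructor <;> rintro ⟨h0, h⟩ <;> refine ⟨h0, ?_⟩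
  · intro i j
    have := congrFun (congrFun h i) j
    simp only [Ipq, Matrix.mul_diagonal, Matrix.diagonal_mul, Matrix.conjTranspose_apply] at this
    have e := eps_mul_self (p := p) (q := q) i
    calc X i j = (eps p q i * eps p q i) * X i j := by rw [e]; ring
      _ = eps p q i * ((starRingEnd ℂ) (X j i) * eps p q j) := by
          rw [mul_assoc]; show _ = eps p q i * ((star (X j i) * if (j:ℕ) < p then (1:ℂ) else -1)); rw [this]; rfl
      _ = eps p q i * eps p q j * (starRingEnd ℂ) (X j i) := by ring
  · ext i j
    simp only [Ipq, Matrix.mul_diagonal, Matrix.diagonal_mul, Matrix.conjTranspose_apply]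
    have hij := h j i
    have e := eps_mul_self (p := p) (q := q) j
    show (starRingEnd ℂ) (X j i) * (if (j : ℕ) < p then (1:ℂ) else -1)
        = (if (i : ℕ) < p then (1:ℂ) else -1) * X i j
    have hc : (starRingEnd ℂ) (X j i)
        = eps p q j * eps p q i * X i j := by
      rw [hij]
      simp only [_root_.map_mul, conj_eps, RingHom.id_apply, Complex.conj_conj]
    show (starRingEnd ℂ) (X j i) * eps p q j = eps p q i * X i j
    rw [hc]
    calc eps p q j * eps p q i * X i j * eps p q j
        = (eps p q j * eps p q j) * (eps p q i * X i j) := by ring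
      _ = eps p q i * X i j := by rw [e]; ring

lemma conj_entry {X : Matrix (Fin (p + q)) (Fin (p + q)) ℂ} (hX : cond X) (i j : Fin (p + q)) :
    (starRingEnd ℂ) (X i j) = eps p q i * eps p q j * X j i := by
  rw [hX i j]
  simp only [_root_.map_mul, conj_eps, Complex.conj_conj]

end Stmt11Aux

namespace Stmt11Aux

variable (p q : ℕ)

noncomputable def VpS : Submodule ℝ (Matrix (Fin (p + q)) (Fin (p + q)) ℂ) where
  carrier := {X | Matrix.trace X = 0 ∧ cond X ∧
      ∀ i j : Fin (p + q), ¬ ((i : ℕ) < p ↔ (j : ℕ) < p) → X i j = 0}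
  zero_mem' := by
    refine ⟨by simp, fun i j => by simp, fun i j _ => rfl⟩
  add_mem' := by
    rintro X Y ⟨hX0, hXc, hXb⟩ ⟨hY0, hYc, hYb⟩
    refine ⟨by simp [Matrix.trace_add, hX0, hY0], fun i j => ?_, fun i j h => ?_⟩
    · simp only [Matrix.add_apply, _root_.map_add]
      rw [hXc i j, hYc i j]; ring
    · simp [Matrix.add_apply, hXb i j h, hYb i j h]
  smul_mem' := by
    rintro r X ⟨hX0, hXc, hXb⟩
    refine ⟨by simp [Matrix.trace_smul, hX0], fun i j => ?_, fun i j h => ?_⟩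
    · simp only [Matrix.smul_apply, Complex.real_smul, _root_.map_mul, Complex.conj_ofReal]
      rw [hXc i j]; ring
    · simp [Matrix.smul_apply, hXb i j h]

noncomputable def VmS : Submodule ℝ (Matrix (Fin (p + q)) (Fin (p + q)) ℂ) where
  carrier := {X | cond X ∧ ∀ i j : Fin (p + q), ((i : ℕ) < p ↔ (j : ℕ) < p) → X i j = 0}
  zero_mem' := ⟨fun i j => by simp, fun i j _ => rfl⟩
  add_mem' := by
    rintro X Y ⟨hXc, hXb⟩ ⟨hYc, hYb⟩
    refine ⟨fun i j => ?_, fun i j h => ?_⟩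
    · simp only [Matrix.add_apply, _root_.map_add]
      rw [hXc i j, hYc i j]; ring
    · simp [Matrix.add_apply, hXb i j h, hYb i j h]
  smul_mem' := by
    rintro r X ⟨hXc, hXb⟩
    refine ⟨fun i j => ?_, fun i j h => ?_⟩
    · simp only [Matrix.smul_apply, Complex.real_smul, _root_.map_mul, Complex.conj_ofReal]
      rw [hXc i j]; ring
    · simp [Matrix.smul_apply, hXb i j h]

variable {p q}

lemma VmS_trace {X : Matrix (Fin (p + q)) (Fin (p + q)) ℂ} (hX : X ∈ VmS p q) :
    Matrix.trace X = 0 := by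
  have : ∀ i, X i i = 0 := fun i => hX.2 i i Iff.rfl
  simp [Matrix.trace, Matrix.diag, this]

lemma trace_mul_eq_sum (X Y : Matrix (Fin (p + q)) (Fin (p + q)) ℂ) :
    Matrix.trace (X * Y) = ∑ i, ∑ j, X i j * Y j i := by
  simp [Matrix.trace, Matrix.mul_apply, Matrix.diag]

lemma key {X : Matrix (Fin (p + q)) (Fin (p + q)) ℂ} (hX : cond X) :
    Matrix.trace (X * Matrix.of (fun i j => eps p q i * eps p q j * X i j))
      = ((∑ i, ∑ j, Complex.normSq (X i j) : ℝ) : ℂ) := by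
  rw [trace_mul_eq_sum]
  push_cast
  refine Finset.sum_congr rfl fun i _ => Finset.sum_congr rfl fun j _ => ?_
  have ei := eps_mul_self (p := p) (q := q) i
  have ej := eps_mul_self (p := p) (q := q) j
  show X i j * (eps p q j * eps p q i * X j i) = _
  rw [hX j i, ← Complex.mul_conj]
  calc X i j * (eps p q j * eps p q i * (eps p q j * eps p q i * (starRingEnd ℂ) (X i j)))
      = (eps p q j * eps p q j) * (eps p q i * eps p q i)
          * (X i j * (starRingEnd ℂ) (X i j)) := by ring
    _ = X i j * (starRingEnd ℂ) (X i j) := by rw [ei, ej]; ring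

end Stmt11Aux

namespace Stmt11Aux

variable (p q : ℕ)

lemma eps_cases (i : Fin (p + q)) : eps p q i = 1 ∨ eps p q i = -1 := by
  unfold eps; split
  · exact Or.inl rfl
  · exact Or.inr rfl

/-- matrices with `cond` (i.e. `J⁻¹ Xᴴ J = X`). -/
noncomputable def Wp : Submodule ℝ (Matrix (Fin (p + q)) (Fin (p + q)) ℂ) where
  carrier := {X | cond X}
  zero_mem' := fun i j => by simp
  add_mem' := by
    rintro X Y hX hY i j
    simp only [Matrix.add_apply, _root_.map_add]
    rw [hX i j, hY i j]; ring
  smul_mem' := by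
    rintro r X hX i j
    simp only [Matrix.smul_apply, Complex.real_smul, _root_.map_mul, Complex.conj_ofReal]
    rw [hX i j]; ring

/-- matrices with the anti-condition. -/
noncomputable def Wa : Submodule ℝ (Matrix (Fin (p + q)) (Fin (p + q)) ℂ) where
  carrier := {X | ∀ i j, X i j = -(eps p q i * eps p q j * (starRingEnd ℂ) (X j i))}
  zero_mem' := fun i j => by simp
  add_mem' := by
    rintro X Y hX hY i j
    simp only [Matrix.add_apply, _root_.map_add]
    rw [hX i j, hY i j]; ring
  smul_mem' := by
    rintro r X hX i j
    simp only [Matrix.smul_apply, Complex.real_smul, _root_.map_mul, Complex.conj_ofReal]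
    rw [hX i j]; ring

variable {p q}

noncomputable def WpEquiv : ↥(Wp p q) ≃ₗ[ℝ] ↥(Wa p q) where
  toFun X := ⟨(Complex.I : ℂ) • X.1, by
    intro i j
    simp only [Matrix.smul_apply, smul_eq_mul, _root_.map_mul, Complex.conj_I]
    rw [X.2 i j]; ring⟩
  invFun Y := ⟨(-Complex.I : ℂ) • Y.1, by
    intro i j
    simp only [Matrix.smul_apply, smul_eq_mul, _root_.map_mul, map_neg, Complex.conj_I]
    rw [Y.2 i j]; ring⟩
  left_inv X := by
    apply Subtype.ext
    show (-Complex.I : ℂ) • (Complex.I : ℂ) • X.1 = X.1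
    rw [smul_smul]; norm_num
  right_inv Y := by
    apply Subtype.ext
    show (Complex.I : ℂ) • (-Complex.I : ℂ) • Y.1 = Y.1
    rw [smul_smul]; norm_num
  map_add' X Y := by apply Subtype.ext; show _ • (X.1 + Y.1) = _; rw [smul_add]; rfl
  map_smul' r X := by
    apply Subtype.ext
    show (Complex.I : ℂ) • r • X.1 = r • (Complex.I : ℂ) • X.1
    rw [smul_comm]

lemma Wp_sup_Wa : Wp p q ⊔ Wa p q = ⊤ := by
  rw [eq_top_iff]
  intro X _
  have hei : ∀ i : Fin (p + q), eps p q i = 1 ∨ eps p q i = -1 := eps_cases p q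
  refine Submodule.mem_sup.mpr
    ⟨Matrix.of fun i j => (X i j + eps p q i * eps p q j * (starRingEnd ℂ) (X j i)) / 2, ?_,
     Matrix.of fun i j => (X i j - eps p q i * eps p q j * (starRingEnd ℂ) (X j i)) / 2, ?_, ?_⟩
  · intro i j
    simp only [Matrix.of_apply, _root_.map_add, _root_.map_mul, map_div₀, conj_eps,
      Complex.conj_conj, map_ofNat]
    rcases hei i with h | h <;> rcases hei j with h' | h' <;> rw [h, h'] <;> ring
  · intro i j
    simp only [Matrix.of_apply, map_sub, _root_.map_mul, map_div₀, conj_eps,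
      Complex.conj_conj, map_ofNat]
    rcases hei i with h | h <;> rcases hei j with h' | h' <;> rw [h, h'] <;> ring
  · ext i j
    simp only [Matrix.add_apply, Matrix.of_apply]
    ring

lemma Wp_inf_Wa : Wp p q ⊓ Wa p q = ⊥ := by
  rw [eq_bot_iff]
  rintro X ⟨h1, h2⟩
  have : X = 0 := by
    ext i j
    have a1 := h1 i j
    have a2 := h2 i j
    show X i j = 0
    linear_combination (a1 + a2) / 2
  simp [this]

lemma finrank_Wp : Module.finrank ℝ ↥(Wp p q) = (p + q) * (p + q) := by
  have h1 := Submodule.finrank_sup_add_finrank_inf_eq (Wp p q) (Wa p q)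
  rw [Wp_sup_Wa, Wp_inf_Wa, finrank_top, finrank_bot] at h1
  have h2 : Module.finrank ℝ ↥(Wp p q) = Module.finrank ℝ ↥(Wa p q) :=
    WpEquiv.finrank_eq
  have h3 : Module.finrank ℝ (Matrix (Fin (p + q)) (Fin (p + q)) ℂ)
      = (p + q) * (p + q) * 2 := by
    rw [Module.finrank_matrix, Complex.finrank_real_complex, Fintype.card_fin]
  omega

end Stmt11Aux

namespace Stmt11Aux

variable {p q : ℕ}

lemma trace_im {X : Matrix (Fin (p + q)) (Fin (p + q)) ℂ} (hX : cond X) :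
    (Matrix.trace X).im = 0 := by
  have h : (starRingEnd ℂ) (Matrix.trace X) = Matrix.trace X := by
    simp only [Matrix.trace, Matrix.diag, map_sum]
    refine Finset.sum_congr rfl fun i _ => ?_
    rw [conj_entry hX i i, eps_mul_self, one_mul]
  exact Complex.conj_eq_iff_im.mp h

variable (p q)

/-- the submodule `𝔪`. -/
noncomputable def MS : Submodule ℝ (Matrix (Fin (p + q)) (Fin (p + q)) ℂ) where
  carrier := {X | Matrix.trace X = 0 ∧ cond X}
  zero_mem' := ⟨by simp, fun i j => by simp⟩
  add_mem' := by
    rintro X Y ⟨hX0, hX⟩ ⟨hY0, hY⟩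
    refine ⟨by simp [Matrix.trace_add, hX0, hY0], fun i j => ?_⟩
    simp only [Matrix.add_apply, _root_.map_add]
    rw [hX i j, hY i j]; ring
  smul_mem' := by
    rintro r X ⟨hX0, hX⟩
    refine ⟨by simp [Matrix.trace_smul, hX0], fun i j => ?_⟩
    simp only [Matrix.smul_apply, Complex.real_smul, _root_.map_mul, Complex.conj_ofReal]
    rw [hX i j]; ring

/-- real part of trace, on `Wp`. -/
noncomputable def trRe : ↥(Wp p q) →ₗ[ℝ] ℝ where
  toFun X := (Matrix.trace X.1).re
  map_add' X Y := by simp [Matrix.trace_add]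
  map_smul' r X := by simp [Matrix.trace_smul, Complex.smul_re]

lemma one_mem_Wp : (1 : Matrix (Fin (p + q)) (Fin (p + q)) ℂ) ∈ Wp p q := by
  intro i j
  rcases eq_or_ne i j with h | h
  · subst h
    simp only [Matrix.one_apply_eq, _root_.map_one, mul_one]
    rw [eps_mul_self]
  · rw [Matrix.one_apply_ne h, Matrix.one_apply_ne (Ne.symm h)]
    simp

variable {p q}

lemma trRe_surj (hp : 1 ≤ p) : Function.Surjective (trRe p q) := by
  intro r
  refine ⟨(r / (p + q : ℝ)) • ⟨1, one_mem_Wp p q⟩, ?_⟩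
  have hn : ((p : ℝ) + q) ≠ 0 := by positivity
  rw [_root_.map_smul]
  show (r / ((p : ℝ) + q)) * (Matrix.trace (1 : Matrix (Fin (p+q)) (Fin (p+q)) ℂ)).re = r
  rw [Matrix.trace_one]
  push_cast
  field_simp
  simp [Fintype.card_fin]

lemma finrank_MS (hp : 1 ≤ p) :
    Module.finrank ℝ ↥(MS p q) = (p + q) * (p + q) - 1 := by
  have hrn := LinearMap.finrank_range_add_finrank_ker (trRe p q)
  rw [LinearMap.range_eq_top.mpr (trRe_surj hp), finrank_top, Module.finrank_self,
    finrank_Wp] at hrn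
  have he : Module.finrank ℝ ↥(MS p q)
      = Module.finrank ℝ ↥(LinearMap.ker (trRe p q)) := by
    refine LinearEquiv.finrank_eq ?_
    refine
      { toFun := fun x => ⟨⟨x.1, x.2.2⟩, ?_⟩
        invFun := fun y => ⟨y.1.1, ?_, y.1.2⟩
        left_inv := fun x => rfl
        right_inv := fun y => rfl
        map_add' := fun x y => rfl
        map_smul' := fun r x => rfl }
    · show (Matrix.trace x.1).re = 0
      rw [x.2.1]; simp
    · have h1 : (Matrix.trace y.1.1).re = 0 := y.2
      have h2 : (Matrix.trace y.1.1).im = 0 := trace_im y.1.2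
      exact Complex.ext h1 h2
  omega

end Stmt11Aux

namespace Stmt11Aux

variable {p q : ℕ}

lemma eps_castAdd (i : Fin p) : eps p q (Fin.castAdd q i) = 1 := by
  unfold eps
  rw [if_pos]
  simpa using i.isLt

lemma eps_natAdd (j : Fin q) : eps p q (Fin.natAdd p j) = -1 := by
  unfold eps
  rw [if_neg]
  simp

variable (p q)

/-- build a matrix in `Vm` from its top-right block -/
noncomputable def gmap (B : Matrix (Fin p) (Fin q) ℂ) :
    Matrix (Fin (p + q)) (Fin (p + q)) ℂ :=
  Matrix.of fun k l =>
    Fin.addCases (motive := fun _ => ℂ)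
      (fun i => Fin.addCases (motive := fun _ => ℂ) (fun _ => 0) (fun j => B i j) l)
      (fun j => Fin.addCases (motive := fun _ => ℂ)
        (fun i => -((starRingEnd ℂ) (B i j))) (fun _ => 0) l) k

variable {p q}

lemma gmap_cc (B : Matrix (Fin p) (Fin q) ℂ) (i i' : Fin p) :
    gmap p q B (Fin.castAdd q i) (Fin.castAdd q i') = 0 := by
  simp [gmap]

lemma gmap_cn (B : Matrix (Fin p) (Fin q) ℂ) (i : Fin p) (j : Fin q) :
    gmap p q B (Fin.castAdd q i) (Fin.natAdd p j) = B i j := by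
  simp [gmap]

lemma gmap_nc (B : Matrix (Fin p) (Fin q) ℂ) (j : Fin q) (i : Fin p) :
    gmap p q B (Fin.natAdd p j) (Fin.castAdd q i) = -((starRingEnd ℂ) (B i j)) := by
  simp [gmap]

lemma gmap_nn (B : Matrix (Fin p) (Fin q) ℂ) (j j' : Fin q) :
    gmap p q B (Fin.natAdd p j) (Fin.natAdd p j') = 0 := by
  simp [gmap]

lemma gmap_mem (B : Matrix (Fin p) (Fin q) ℂ) : gmap p q B ∈ VmS p q := by
  constructor
  · intro k l
    induction k using Fin.addCases with
    | left i =>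
      induction l using Fin.addCases with
      | left i' => simp [gmap_cc]
      | right j =>
        rw [gmap_cn, gmap_nc, eps_castAdd, eps_natAdd]
        simp
    | right j =>
      induction l using Fin.addCases with
      | left i =>
        rw [gmap_nc, gmap_cn, eps_castAdd, eps_natAdd]
        simp
      | right j' => simp [gmap_nn]
  · intro k l h
    induction k using Fin.addCases with
    | left i =>
      induction l using Fin.addCases with
      | left i' => exact gmap_cc B i i'
      | right j =>
        exfalso
        have h1 : ((Fin.castAdd q i : Fin (p+q)) : ℕ) < p := by simpa using i.isLt
        have h2 : ¬ ((Fin.natAdd p j : Fin (p+q)) : ℕ) < p := by simp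
        exact h2 (h.mp h1)
    | right j =>
      induction l using Fin.addCases with
      | left i =>
        exfalso
        have h1 : ((Fin.castAdd q i : Fin (p+q)) : ℕ) < p := by simpa using i.isLt
        have h2 : ¬ ((Fin.natAdd p j : Fin (p+q)) : ℕ) < p := by simp
        exact h2 (h.mpr h1)
      | right j' => exact gmap_nn B j j'

noncomputable def VmEquiv : ↥(VmS p q) ≃ₗ[ℝ] Matrix (Fin p) (Fin q) ℂ where
  toFun X := Matrix.of fun i j => X.1 (Fin.castAdd q i) (Fin.natAdd p j)
  invFun B := ⟨gmap p q B, gmap_mem B⟩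
  map_add' X Y := by ext i j; simp
  map_smul' r X := by ext i j; simp
  left_inv X := by
    apply Subtype.ext
    ext k l
    show gmap p q _ k l = X.1 k l
    induction k using Fin.addCases with
    | left i =>
      induction l using Fin.addCases with
      | left i' =>
        rw [gmap_cc]
        exact (X.2.2 _ _ (by simp [i.isLt, i'.isLt])).symm
      | right j => rw [gmap_cn]; rfl
    | right j =>
      induction l using Fin.addCases with
      | left i =>
        rw [gmap_nc]
        have hc := X.2.1 (Fin.natAdd p j) (Fin.castAdd q i)
        rw [hc, eps_natAdd, eps_castAdd]
        show -(starRingEnd ℂ) (Matrix.of _ i j) = _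
        simp only [Matrix.of_apply]
        ring
      | right j' =>
        rw [gmap_nn]
        refine (X.2.2 _ _ ?_).symm
        simp
  right_inv B := by
    ext i j
    exact gmap_cn B i j

lemma finrank_VmS : Module.finrank ℝ ↥(VmS p q) = 2 * p * q := by
  rw [VmEquiv.finrank_eq, Module.finrank_matrix, Complex.finrank_real_complex,
    Fintype.card_fin, Fintype.card_fin]
  ring

end Stmt11Aux

namespace Stmt11Aux

variable {p q : ℕ}

lemma decomp {X : Matrix (Fin (p + q)) (Fin (p + q)) ℂ}
    (h0 : Matrix.trace X = 0) (hc : cond X) :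
    ∃ a ∈ VpS p q, ∃ b ∈ VmS p q, X = a + b := by
  refine ⟨Matrix.of fun i j => if (i : ℕ) < p ↔ (j : ℕ) < p then X i j else 0, ?_,
    Matrix.of fun i j => if (i : ℕ) < p ↔ (j : ℕ) < p then 0 else X i j, ?_, ?_⟩
  · refine ⟨?_, ?_, ?_⟩
    · rw [← h0]
      simp [Matrix.trace, Matrix.diag]
    · intro i j
      simp only [Matrix.of_apply]
      by_cases h : (i : ℕ) < p ↔ (j : ℕ) < p
      · rw [if_pos h, if_pos h.symm]
        exact hc i j
      · rw [if_neg h, if_neg (fun h' => h h'.symm)]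
        simp
    · intro i j h
      simp only [Matrix.of_apply, if_neg h]
  · refine ⟨?_, ?_⟩
    · intro i j
      simp only [Matrix.of_apply]
      by_cases h : (i : ℕ) < p ↔ (j : ℕ) < p
      · rw [if_pos h, if_pos h.symm]
        simp
      · rw [if_neg h, if_neg (fun h' => h h'.symm)]
        exact hc i j
    · intro i j h
      simp only [Matrix.of_apply, if_pos h]
  · ext i j
    simp only [Matrix.add_apply, Matrix.of_apply]
    by_cases h : (i : ℕ) < p ↔ (j : ℕ) < p <;> simp [h]

lemma VpS_inf_VmS (X : Matrix (Fin (p + q)) (Fin (p + q)) ℂ)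
    (hX : X ∈ VpS p q) (hY : X ∈ VmS p q) : X = 0 := by
  ext i j
  show X i j = 0
  by_cases h : (i : ℕ) < p ↔ (j : ℕ) < p
  · exact hY.2 i j h
  · exact hX.2.2 i j h

lemma VpS_sup_VmS : VpS p q ⊔ VmS p q = MS p q := by
  apply le_antisymm
  · apply sup_le
    · rintro X ⟨h0, hc, -⟩
      exact ⟨h0, hc⟩
    · intro X hX
      exact ⟨VmS_trace hX, hX.1⟩
  · rintro X ⟨h0, hc⟩
    obtain ⟨a, ha, b, hb, hab⟩ := decomp h0 hc
    exact Submodule.mem_sup.mpr ⟨a, ha, b, hb, hab.symm⟩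

lemma finrank_VpS (hp : 1 ≤ p) (hq : 1 ≤ q) :
    Module.finrank ℝ ↥(VpS p q) = p ^ 2 + q ^ 2 - 1 := by
  have h1 := Submodule.finrank_sup_add_finrank_inf_eq (VpS p q) (VmS p q)
  have hinf : VpS p q ⊓ VmS p q = ⊥ := by
    rw [eq_bot_iff]
    rintro X ⟨hX, hY⟩
    simpa using VpS_inf_VmS X hX hY
  rw [VpS_sup_VmS, hinf, finrank_bot, finrank_MS hp, finrank_VmS] at h1
  -- h1 : (p+q)*(p+q) - 1 + 0 = finrank VpS + 2*p*q
  have hexp : (p + q) * (p + q) = p ^ 2 + q ^ 2 + 2 * p * q := by ring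
  have hge : 1 ≤ p ^ 2 + q ^ 2 := by nlinarith
  rw [hexp] at h1
  omega
end Stmt11Aux

open Stmt11Aux

/-- On `𝔪 = {X : tr X = 0, X†·I_{p,q} = I_{p,q}·X}` the trace `tr(X·Y)`
is real, and the real bilinear form `B(X,Y) = Re tr(X·Y)` is nondegenerate of signature
`(p² + q² − 1, 2pq)`. -/
theorem stmt11 (p q : ℕ) (hp : 1 ≤ p) (hq : 1 ≤ q)
    (m : Set (Matrix (Fin (p + q)) (Fin (p + q)) ℂ))
    (hm : m = {A | Matrix.trace A = 0 ∧ Aᴴ * Ipq p q = Ipq p q * A}) :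
    -- the trace form is real-valued on `𝔪`
    (∀ X ∈ m, ∀ Y ∈ m, (Matrix.trace (X * Y)).im = 0) ∧
    -- `B` is nondegenerate on `𝔪`
    (∀ X ∈ m, (∀ Y ∈ m, (Matrix.trace (X * Y)).re = 0) → X = 0) ∧
    -- signature `(p² + q² − 1, 2pq)`
    (∃ Vp Vm : Submodule ℝ (Matrix (Fin (p + q)) (Fin (p + q)) ℂ),
      (Vp : Set (Matrix (Fin (p + q)) (Fin (p + q)) ℂ)) ⊆ m ∧
      (Vm : Set (Matrix (Fin (p + q)) (Fin (p + q)) ℂ)) ⊆ m ∧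
      (∀ X ∈ m, ∃ a ∈ Vp, ∃ b ∈ Vm, X = a + b) ∧
      (∀ X, X ∈ Vp → X ∈ Vm → X = 0) ∧
      (∀ a ∈ Vp, ∀ b ∈ Vm, (Matrix.trace (a * b)).re = 0) ∧
      (∀ a ∈ Vp, a ≠ 0 → 0 < (Matrix.trace (a * a)).re) ∧
      (∀ b ∈ Vm, b ≠ 0 → (Matrix.trace (b * b)).re < 0) ∧
      Module.finrank ℝ ↥Vp = p ^ 2 + q ^ 2 - 1 ∧
      Module.finrank ℝ ↥Vm = 2 * p * q) := by
  have hmem : ∀ X, X ∈ m ↔ Matrix.trace X = 0 ∧ cond X := by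
    intro X
    rw [hm]
    exact mem_iff X
  refine ⟨?_, ?_, ?_⟩
  · -- real-valued
    intro X hX Y hY
    obtain ⟨-, hcX⟩ := (hmem X).mp hX
    obtain ⟨-, hcY⟩ := (hmem Y).mp hY
    have h : (starRingEnd ℂ) (Matrix.trace (X * Y)) = Matrix.trace (X * Y) := by
      rw [trace_mul_eq_sum, map_sum]
      calc ∑ i, (starRingEnd ℂ) (∑ j, X i j * Y j i)
          = ∑ i, ∑ j, X j i * Y i j := by
            refine Finset.sum_congr rfl fun i _ => ?_
            rw [map_sum]
            refine Finset.sum_congr rfl fun j _ => ?_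
            rw [_root_.map_mul, conj_entry hcX, conj_entry hcY]
            rcases eps_cases p q i with h | h <;> rcases eps_cases p q j with h' | h' <;>
              rw [h, h'] <;> ring
        _ = ∑ i, ∑ j, X i j * Y j i := Finset.sum_comm
    exact Complex.conj_eq_iff_im.mp h
  · -- nondegenerate
    intro X hX h
    obtain ⟨h0, hc⟩ := (hmem X).mp hX
    set Y := Matrix.of fun i j => eps p q i * eps p q j * X i j with hY
    have hYm : Y ∈ m := by
      refine (hmem Y).mpr ⟨?_, ?_⟩
      · rw [← h0]
        simp only [Matrix.trace, Matrix.diag, hY, Matrix.of_apply]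
        refine Finset.sum_congr rfl fun i _ => ?_
        rw [eps_mul_self, one_mul]
      · intro i j
        simp only [hY, Matrix.of_apply, _root_.map_mul, conj_eps]
        rw [hc i j]
        rcases eps_cases p q i with h1 | h1 <;> rcases eps_cases p q j with h2 | h2 <;>
          rw [h1, h2] <;> ring
    have hre := h Y hYm
    rw [key hc] at hre
    rw [Complex.ofReal_re] at hre
    ext i j
    show X i j = 0
    have h1 := (Finset.sum_eq_zero_iff_of_nonneg
      (fun i _ => Finset.sum_nonneg fun j _ => Complex.normSq_nonneg _)).mp hre i
      (Finset.mem_univ i)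
    have h2 := (Finset.sum_eq_zero_iff_of_nonneg
      (fun j _ => Complex.normSq_nonneg _)).mp h1 j (Finset.mem_univ j)
    exact Complex.normSq_eq_zero.mp h2
  · refine ⟨VpS p q, VmS p q, ?_, ?_, ?_, ?_, ?_, ?_, ?_, ?_, ?_⟩
    · intro X hX
      exact (hmem X).mpr ⟨hX.1, hX.2.1⟩
    · intro X hX
      exact (hmem X).mpr ⟨VmS_trace hX, hX.1⟩
    · intro X hX
      obtain ⟨h0, hc⟩ := (hmem X).mp hX
      exact decomp h0 hc
    · exact VpS_inf_VmS
    · -- orthogonality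
      intro a ha b hb
      have : Matrix.trace (a * b) = 0 := by
        rw [trace_mul_eq_sum]
        refine Finset.sum_eq_zero fun i _ => Finset.sum_eq_zero fun j _ => ?_
        by_cases h : (i : ℕ) < p ↔ (j : ℕ) < p
        · rw [hb.2 j i h.symm, mul_zero]
        · rw [ha.2.2 i j h, zero_mul]
      rw [this]
      simp
    · -- positive definite on Vp
      intro a ha ha0
      have hof : Matrix.of (fun i j => eps p q i * eps p q j * a i j) = a := by
        ext i j
        simp only [Matrix.of_apply]
        by_cases h : (i : ℕ) < p ↔ (j : ℕ) < p
        · rw [eps_mul_of_iff h, one_mul]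
        · rw [ha.2.2 i j h, mul_zero]
      have hk := key ha.2.1
      rw [hof] at hk
      rw [hk, Complex.ofReal_re]
      have hne : ∃ i j, a i j ≠ 0 := by
        by_contra h'
        push_neg at h'
        exact ha0 (by ext i j; exact h' i j)
      obtain ⟨i, j, hij⟩ := hne
      refine Finset.sum_pos' (fun i _ => Finset.sum_nonneg fun j _ => Complex.normSq_nonneg _)
        ⟨i, Finset.mem_univ i, Finset.sum_pos'
          (fun j _ => Complex.normSq_nonneg _)
          ⟨j, Finset.mem_univ j, Complex.normSq_pos.mpr hij⟩⟩
    · -- negative definite on Vm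
      intro b hb hb0
      have hof : Matrix.of (fun i j => eps p q i * eps p q j * b i j) = -b := by
        ext i j
        simp only [Matrix.of_apply, Matrix.neg_apply]
        by_cases h : (i : ℕ) < p ↔ (j : ℕ) < p
        · rw [hb.2 i j h]
          simp
        · rw [eps_mul_of_not_iff h]
          ring
      have hk := key hb.1
      rw [hof, Matrix.mul_neg, Matrix.trace_neg, neg_eq_iff_eq_neg] at hk
      rw [hk]
      have hne : ∃ i j, b i j ≠ 0 := by
        by_contra h'
        push_neg at h'
        exact hb0 (by ext i j; exact h' i j)
      obtain ⟨i, j, hij⟩ := hne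
      have hpos : (0:ℝ) < ∑ i, ∑ j, Complex.normSq (b i j) :=
        Finset.sum_pos' (fun i _ => Finset.sum_nonneg fun j _ => Complex.normSq_nonneg _)
          ⟨i, Finset.mem_univ i, Finset.sum_pos'
            (fun j _ => Complex.normSq_nonneg _)
            ⟨j, Finset.mem_univ j, Complex.normSq_pos.mpr hij⟩⟩
      simpa using hpos
    · exact finrank_VpS hp hq
    · exact finrank_VmS
end

section
/- The symmetric real bilinear form B(V,W) := (1/2)·Re(tr(V·W)) on the real vector space 𝔪 is nondegenerate of signature (p(2p−1) + q(2q−1) − 1, 4pq): 𝔪 has real dimension (2n+1)(n−1), and there exist real subspaces V₊ and V₋ of 𝔪 with 𝔪 = V₊ ⊕ V₋, B(v₊, v₋) = 0 for all v₊ ∈ V₊ and v₋ ∈ V₋, B positive definite on V₊, B negative definite on V₋, dim_ℝ V₊ = p(2p−1) + q(2q−1) − 1, and dim_ℝ V₋ = 4pq. -/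
open Matrix

/-- The real subspace `𝔪` of block matrices `[[X, −Y],[Ȳ, X̄]]` with `tr X = 0`,
`X†·I_{p,q} = I_{p,q}·X` and `Yᵀ·I_{p,q} + I_{p,q}·Y = 0`. -/
def mSp (p q : ℕ) :
    Set (Matrix (Fin (p + q) ⊕ Fin (p + q)) (Fin (p + q) ⊕ Fin (p + q)) ℂ) :=
  {W | ∃ X Y : Matrix (Fin (p + q)) (Fin (p + q)) ℂ,
    Matrix.trace X = 0 ∧ Xᴴ * Ipq p q = Ipq p q * X ∧
    Yᵀ * Ipq p q + Ipq p q * Y = 0 ∧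
    W = Matrix.fromBlocks X (-Y) (Y.map (starRingEnd ℂ)) (X.map (starRingEnd ℂ))}

namespace S12

variable (p q : ℕ)

/-- the ±1 diagonal entries -/
def dd (i : Fin (p + q)) : ℂ := if (i : ℕ) < p then 1 else -1

lemma dd_mul_self (i : Fin (p+q)) : dd p q i * dd p q i = 1 := by
  unfold dd; split_ifs <;> ring

lemma conj_dd (i : Fin (p+q)) : (starRingEnd ℂ) (dd p q i) = dd p q i := by
  unfold dd; split_ifs <;> simp

def same (i j : Fin (p + q)) : Prop := ((i : ℕ) < p ↔ (j : ℕ) < p)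

instance (i j : Fin (p+q)) : Decidable (same p q i j) := by unfold same; infer_instance

lemma same_refl (i : Fin (p+q)) : same p q i i := Iff.rfl

lemma same_symm {i j : Fin (p+q)} (h : same p q i j) : same p q j i := h.symm

lemma dd_mul_same {i j : Fin (p+q)} (h : same p q i j) : dd p q i * dd p q j = 1 := by
  have h2 : ((i:ℕ) < p ↔ (j:ℕ) < p) := h
  unfold dd
  by_cases h1 : (i:ℕ) < p
  · rw [if_pos h1, if_pos (h2.mp h1)]; ring
  · rw [if_neg h1, if_neg (fun hh => h1 (h2.mpr hh))]; ring

lemma dd_mul_not_same {i j : Fin (p+q)} (h : ¬ same p q i j) : dd p q i * dd p q j = -1 := by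
  have h' : ¬ ((i:ℕ) < p ↔ (j:ℕ) < p) := h
  unfold dd
  by_cases h1 : (i:ℕ) < p
  · have hj : ¬ (j:ℕ) < p := fun hh => h' (iff_of_true h1 hh)
    rw [if_pos h1, if_neg hj]; ring
  · have hj : (j:ℕ) < p := by by_contra hh; exact h' (iff_of_false h1 hh)
    rw [if_neg h1, if_pos hj]; ring

/-- entrywise form of the X-condition -/
lemma herm_iff (X : Matrix (Fin (p+q)) (Fin (p+q)) ℂ) :
    Xᴴ * Ipq p q = Ipq p q * X ↔
      ∀ i j, (starRingEnd ℂ) (X j i) * dd p q j = dd p q i * X i j := by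
  rw [← Matrix.ext_iff]
  unfold Ipq dd
  simp [Matrix.mul_diagonal, Matrix.diagonal_mul, Matrix.conjTranspose_apply]

/-- entrywise form of the Y-condition -/
lemma skew_iff (Y : Matrix (Fin (p+q)) (Fin (p+q)) ℂ) :
    Yᵀ * Ipq p q + Ipq p q * Y = 0 ↔
      ∀ i j, Y j i * dd p q j + dd p q i * Y i j = 0 := by
  rw [← Matrix.ext_iff]
  unfold Ipq dd
  simp [Matrix.mul_diagonal, Matrix.diagonal_mul, Matrix.transpose_apply]

lemma herm' {X : Matrix (Fin (p+q)) (Fin (p+q)) ℂ}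
    (h : Xᴴ * Ipq p q = Ipq p q * X) (i j : Fin (p+q)) :
    X j i = dd p q i * dd p q j * (starRingEnd ℂ) (X i j) := by
  have h1 := (herm_iff p q X).1 h j i
  -- conj (X i j) * dd i = dd j * X j i
  have : dd p q j * (dd p q j * X j i) = dd p q j * ((starRingEnd ℂ) (X i j) * dd p q i) := by
    rw [h1]
  rw [← mul_assoc, dd_mul_self, one_mul] at this
  rw [this]; ring

lemma skew' {Y : Matrix (Fin (p+q)) (Fin (p+q)) ℂ}
    (h : Yᵀ * Ipq p q + Ipq p q * Y = 0) (i j : Fin (p+q)) :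
    Y j i = -(dd p q i * dd p q j) * Y i j := by
  have h1 := (skew_iff p q Y).1 h i j
  -- Y j i * dd j + dd i * Y i j = 0
  have h2 : Y j i * dd p q j = -(dd p q i * Y i j) := by linear_combination h1
  have : Y j i * dd p q j * dd p q j = -(dd p q i * Y i j) * dd p q j := by rw [h2]
  rw [mul_assoc, dd_mul_self, mul_one] at this
  rw [this]; ring

end S12

section Part2
open Matrix Complex
namespace S12

variable (p q : ℕ)

lemma dd_same {i j : Fin (p+q)} (h : same p q i j) : dd p q i = dd p q j := by
  have h2 : ((i:ℕ) < p ↔ (j:ℕ) < p) := h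
  unfold dd
  by_cases h1 : (i:ℕ) < p
  · rw [if_pos h1, if_pos (h2.mp h1)]
  · rw [if_neg h1, if_neg (fun hh => h1 (h2.mpr hh))]

lemma dd_not_same {i j : Fin (p+q)} (h : ¬ same p q i j) : dd p q j = -dd p q i := by
  have h' : ¬ ((i:ℕ) < p ↔ (j:ℕ) < p) := h
  unfold dd
  by_cases h1 : (i:ℕ) < p
  · have hj : ¬ (j:ℕ) < p := fun hh => h' (iff_of_true h1 hh)
    rw [if_pos h1, if_neg hj]
  · have hj : (j:ℕ) < p := by by_contra hh; exact h' (iff_of_false h1 hh)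
    rw [if_neg h1, if_pos hj]; ring

abbrev UpS := {z : Fin (p+q) × Fin (p+q) // same p q z.1 z.2 ∧ z.1 < z.2}
abbrev UmS := {z : Fin (p+q) × Fin (p+q) // (z.1:ℕ) < p ∧ ¬ (z.2:ℕ) < p}

instance : Fintype (UpS p q) := by unfold UpS; infer_instance
instance : Fintype (UmS p q) := by unfold UmS; infer_instance

def XP (f : UpS p q → ℂ) (v : Fin (p+q) → ℝ) : Matrix (Fin (p+q)) (Fin (p+q)) ℂ :=
  fun i j =>
    if i = j then (v i : ℂ)
    else if h : same p q i j ∧ i < j then f ⟨(i,j), h⟩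
    else if h : same p q i j ∧ j < i then (starRingEnd ℂ) (f ⟨(j,i), ⟨same_symm p q h.1, h.2⟩⟩)
    else 0

def YP (g : UpS p q → ℂ) : Matrix (Fin (p+q)) (Fin (p+q)) ℂ :=
  fun i j =>
    if h : same p q i j ∧ i < j then g ⟨(i,j), h⟩
    else if h : same p q i j ∧ j < i then -(g ⟨(j,i), ⟨same_symm p q h.1, h.2⟩⟩)
    else 0

def XM (f : UmS p q → ℂ) : Matrix (Fin (p+q)) (Fin (p+q)) ℂ :=
  fun i j =>
    if h : (i:ℕ) < p ∧ ¬ (j:ℕ) < p then f ⟨(i,j), h⟩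
    else if h : (j:ℕ) < p ∧ ¬ (i:ℕ) < p then -((starRingEnd ℂ) (f ⟨(j,i), h⟩))
    else 0

def YM (g : UmS p q → ℂ) : Matrix (Fin (p+q)) (Fin (p+q)) ℂ :=
  fun i j =>
    if h : (i:ℕ) < p ∧ ¬ (j:ℕ) < p then g ⟨(i,j), h⟩
    else if h : (j:ℕ) < p ∧ ¬ (i:ℕ) < p then g ⟨(j,i), h⟩
    else 0

-- entry lemmas
lemma XP_diag (f v) (i : Fin (p+q)) : XP p q f v i i = ((v i : ℝ) : ℂ) := by
  unfold XP; rw [if_pos rfl]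

lemma XP_conj (f v) (i j : Fin (p+q)) :
    XP p q f v j i = (starRingEnd ℂ) (XP p q f v i j) := by
  unfold XP
  rcases lt_trichotomy i j with h | h | h
  · have hij : i ≠ j := ne_of_lt h
    have hji : j ≠ i := hij.symm
    rw [if_neg hji, if_neg hij]
    by_cases hs : same p q i j
    · rw [dif_neg (fun hc : same p q j i ∧ j < i => absurd h (not_lt_of_gt hc.2)),
        dif_pos ⟨same_symm p q hs, h⟩, dif_pos ⟨hs, h⟩]
    · have hs' : ¬ same p q j i := fun hc => hs (same_symm p q hc)
      rw [dif_neg (fun hc : same p q j i ∧ j < i => hs' hc.1),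
        dif_neg (fun hc : same p q j i ∧ i < j => hs' hc.1),
        dif_neg (fun hc : same p q i j ∧ i < j => hs hc.1),
        dif_neg (fun hc : same p q i j ∧ j < i => hs hc.1)]
      simp
  · subst h; rw [if_pos rfl]; simp
  · have hij : i ≠ j := ne_of_gt h
    have hji : j ≠ i := hij.symm
    rw [if_neg hji, if_neg hij]
    by_cases hs : same p q i j
    · rw [dif_pos ⟨same_symm p q hs, h⟩,
        dif_neg (fun hc : same p q i j ∧ i < j => absurd h (not_lt_of_gt hc.2)),
        dif_pos ⟨hs, h⟩]
      simp
    · have hs' : ¬ same p q j i := fun hc => hs (same_symm p q hc)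
      rw [dif_neg (fun hc : same p q j i ∧ j < i => hs' hc.1),
        dif_neg (fun hc : same p q j i ∧ i < j => hs' hc.1),
        dif_neg (fun hc : same p q i j ∧ i < j => hs hc.1),
        dif_neg (fun hc : same p q i j ∧ j < i => hs hc.1)]
      simp

lemma XP_not_same (f v) {i j : Fin (p+q)} (h : ¬ same p q i j) : XP p q f v i j = 0 := by
  unfold XP
  rw [if_neg (fun hc : i = j => h (hc ▸ same_refl p q i)),
    dif_neg (fun hc : same p q i j ∧ i < j => h hc.1),
    dif_neg (fun hc : same p q i j ∧ j < i => h hc.1)]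

lemma YP_anti (g) (i j : Fin (p+q)) : YP p q g j i = -(YP p q g i j) := by
  unfold YP
  rcases lt_trichotomy i j with h | h | h
  · by_cases hs : same p q i j
    · rw [dif_neg (fun hc : same p q j i ∧ j < i => absurd h (not_lt_of_gt hc.2)),
        dif_pos ⟨same_symm p q hs, h⟩, dif_pos ⟨hs, h⟩]
    · have hs' : ¬ same p q j i := fun hc => hs (same_symm p q hc)
      rw [dif_neg (fun hc : same p q j i ∧ j < i => hs' hc.1),
        dif_neg (fun hc : same p q j i ∧ i < j => hs' hc.1),
        dif_neg (fun hc : same p q i j ∧ i < j => hs hc.1),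
        dif_neg (fun hc : same p q i j ∧ j < i => hs hc.1)]
      simp
  · subst h
    rw [dif_neg (fun hc : same p q i i ∧ i < i => absurd hc.2 (lt_irrefl i))]
    rw [dif_neg (fun hc : same p q i i ∧ i < i => absurd hc.2 (lt_irrefl i))]
    simp
  · by_cases hs : same p q i j
    · rw [dif_pos ⟨same_symm p q hs, h⟩,
        dif_neg (fun hc : same p q i j ∧ i < j => absurd h (not_lt_of_gt hc.2)),
        dif_pos ⟨hs, h⟩]
      simp
    · have hs' : ¬ same p q j i := fun hc => hs (same_symm p q hc)
      rw [dif_neg (fun hc : same p q j i ∧ j < i => hs' hc.1),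
        dif_neg (fun hc : same p q j i ∧ i < j => hs' hc.1),
        dif_neg (fun hc : same p q i j ∧ i < j => hs hc.1),
        dif_neg (fun hc : same p q i j ∧ j < i => hs hc.1)]
      simp

lemma YP_not_same (g) {i j : Fin (p+q)} (h : ¬ same p q i j) : YP p q g i j = 0 := by
  unfold YP
  rw [dif_neg (fun hc : same p q i j ∧ i < j => h hc.1),
    dif_neg (fun hc : same p q i j ∧ j < i => h hc.1)]

lemma not_same_of_mix {i j : Fin (p+q)} (h : (i:ℕ) < p ∧ ¬ (j:ℕ) < p) : ¬ same p q i j :=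
  fun hc => h.2 ((hc : (i:ℕ) < p ↔ (j:ℕ) < p).mp h.1)

lemma XM_same (f) {i j : Fin (p+q)} (h : same p q i j) : XM p q f i j = 0 := by
  unfold XM
  rw [dif_neg (fun hc => not_same_of_mix p q hc h),
    dif_neg (fun hc : (j:ℕ) < p ∧ ¬ (i:ℕ) < p => not_same_of_mix p q hc (same_symm p q h))]

lemma YM_same (g) {i j : Fin (p+q)} (h : same p q i j) : YM p q g i j = 0 := by
  unfold YM
  rw [dif_neg (fun hc => not_same_of_mix p q hc h),
    dif_neg (fun hc : (j:ℕ) < p ∧ ¬ (i:ℕ) < p => not_same_of_mix p q hc (same_symm p q h))]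

lemma XM_conj (f) (i j : Fin (p+q)) :
    XM p q f j i = -((starRingEnd ℂ) (XM p q f i j)) := by
  unfold XM
  by_cases h1 : (i:ℕ) < p ∧ ¬ (j:ℕ) < p
  · rw [dif_neg (fun hc : (j:ℕ) < p ∧ ¬ (i:ℕ) < p => hc.2 h1.1), dif_pos h1, dif_pos h1]
  · by_cases h2 : (j:ℕ) < p ∧ ¬ (i:ℕ) < p
    · rw [dif_pos h2, dif_neg h1, dif_pos h2]; simp
    · rw [dif_neg (fun hc : (j:ℕ) < p ∧ ¬ (i:ℕ) < p => h2 hc),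
        dif_neg (fun hc : (i:ℕ) < p ∧ ¬ (j:ℕ) < p => h1 hc), dif_neg h1, dif_neg h2]
      simp

lemma YM_symm (g) (i j : Fin (p+q)) : YM p q g j i = YM p q g i j := by
  unfold YM
  by_cases h1 : (i:ℕ) < p ∧ ¬ (j:ℕ) < p
  · rw [dif_neg (fun hc : (j:ℕ) < p ∧ ¬ (i:ℕ) < p => hc.2 h1.1), dif_pos h1, dif_pos h1]
  · by_cases h2 : (j:ℕ) < p ∧ ¬ (i:ℕ) < p
    · rw [dif_pos h2, dif_neg h1, dif_pos h2]
    · rw [dif_neg (fun hc : (j:ℕ) < p ∧ ¬ (i:ℕ) < p => h2 hc),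
        dif_neg (fun hc : (i:ℕ) < p ∧ ¬ (j:ℕ) < p => h1 hc), dif_neg h1, dif_neg h2]

end S12
end Part2
section Part3
open Matrix Complex
namespace S12

variable (p q : ℕ)

def blk (X Y : Matrix (Fin (p+q)) (Fin (p+q)) ℂ) :
    Matrix (Fin (p+q) ⊕ Fin (p+q)) (Fin (p+q) ⊕ Fin (p+q)) ℂ :=
  Matrix.fromBlocks X (-Y) (Y.map (starRingEnd ℂ)) (X.map (starRingEnd ℂ))

lemma blk_add (X X' Y Y') : blk p q (X + X') (Y + Y') = blk p q X Y + blk p q X' Y' := by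
  ext i j
  rcases i with i | i <;> rcases j with j | j <;>
    simp [blk, Matrix.add_apply, Matrix.map_apply, map_add, neg_add, add_comm]

lemma blk_smul (c : ℝ) (X Y) : blk p q (c • X) (c • Y) = c • blk p q X Y := by
  ext i j
  rcases i with i | i <;> rcases j with j | j <;>
    simp [blk, Matrix.smul_apply, Matrix.map_apply, Complex.real_smul, _root_.map_mul,
      Complex.conj_ofReal, mul_comm, mul_left_comm]

lemma trace_blk (X Y) : Matrix.trace (blk p q X Y) =
    Matrix.trace X + (starRingEnd ℂ) (Matrix.trace X) := by
  simp [blk, Matrix.trace, Matrix.diag, Fintype.sum_sum_type, Matrix.map_apply, map_sum]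

lemma XP_cond (f v) : (XP p q f v)ᴴ * Ipq p q = Ipq p q * XP p q f v := by
  rw [herm_iff]; intro i j
  by_cases hs : same p q i j
  · rw [← dd_same p q hs, XP_conj p q f v i j]
    simp [mul_comm]
  · rw [XP_not_same p q f v hs, XP_not_same p q f v (fun hc => hs (same_symm p q hc))]
    simp

lemma YP_cond (g) : (YP p q g)ᵀ * Ipq p q + Ipq p q * YP p q g = 0 := by
  rw [skew_iff]; intro i j
  by_cases hs : same p q i j
  · rw [YP_anti p q g i j, ← dd_same p q hs]; ring
  · rw [YP_not_same p q g hs, YP_not_same p q g (fun hc => hs (same_symm p q hc))]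
    simp

lemma XM_cond (f) : (XM p q f)ᴴ * Ipq p q = Ipq p q * XM p q f := by
  rw [herm_iff]; intro i j
  by_cases hs : same p q i j
  · rw [XM_same p q f hs, XM_same p q f (same_symm p q hs)]; simp
  · rw [XM_conj p q f i j, dd_not_same p q hs]
    simp only [map_neg, Complex.conj_conj, RingHomCompTriple.comp_apply]
    simp [starRingEnd_self_apply]
    ring

lemma YM_cond (g) : (YM p q g)ᵀ * Ipq p q + Ipq p q * YM p q g = 0 := by
  rw [skew_iff]; intro i j
  by_cases hs : same p q i j
  · rw [YM_same p q g hs, YM_same p q g (same_symm p q hs)]; simp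
  · rw [YM_symm p q g i j, dd_not_same p q hs]; ring

lemma trace_XP (f v) : Matrix.trace (XP p q f v) = ((∑ i, v i : ℝ) : ℂ) := by
  simp [Matrix.trace, Matrix.diag, XP_diag]

lemma trace_XM (f) : Matrix.trace (XM p q f) = 0 := by
  have : ∀ i, XM p q f i i = 0 := fun i => XM_same p q f (same_refl p q i)
  simp [Matrix.trace, Matrix.diag, this]

lemma memP (f v g) (hv : ∑ i, v i = 0) :
    blk p q (XP p q f v) (YP p q g) ∈ mSp p q := by
  refine ⟨_, _, ?_, XP_cond p q f v, YP_cond p q g, rfl⟩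
  rw [trace_XP, hv]; simp

lemma memM (f g) : blk p q (XM p q f) (YM p q g) ∈ mSp p q :=
  ⟨_, _, trace_XM p q f, XM_cond p q f, YM_cond p q g, rfl⟩

-- parameter spaces
def PP := (UpS p q → ℂ) × (Fin (p+q) → ℝ) × (UpS p q → ℂ)
def PM := (UmS p q → ℂ) × (UmS p q → ℂ)

instance : AddCommGroup (PP p q) := by unfold PP; infer_instance
noncomputable instance : Module ℝ (PP p q) := by unfold PP; infer_instance
instance : AddCommGroup (PM p q) := by unfold PM; infer_instance
noncomputable instance : Module ℝ (PM p q) := by unfold PM; infer_instance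
instance : FiniteDimensional ℝ (PP p q) := by unfold PP; infer_instance
instance : FiniteDimensional ℝ (PM p q) := by unfold PM; infer_instance

lemma XP_add (f f' v v') : XP p q (f + f') (v + v') = XP p q f v + XP p q f' v' := by
  funext i j
  show _ = XP p q f v i j + XP p q f' v' i j
  unfold XP
  split_ifs <;> push_cast <;> simp

lemma XP_smul (c : ℝ) (f v) : XP p q (c • f) (c • v) = c • XP p q f v := by
  funext i j
  show _ = c • XP p q f v i j
  unfold XP
  split_ifs <;> simp [Complex.real_smul, _root_.map_mul, Complex.conj_ofReal] <;> push_cast <;> ring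

lemma YP_add (g g') : YP p q (g + g') = YP p q g + YP p q g' := by
  funext i j
  show _ = YP p q g i j + YP p q g' i j
  unfold YP
  split_ifs <;> simp <;> ring

lemma YP_smul (c : ℝ) (g) : YP p q (c • g) = c • YP p q g := by
  funext i j
  show _ = c • YP p q g i j
  unfold YP
  split_ifs <;> simp [Complex.real_smul] <;> ring

lemma XM_add (f f') : XM p q (f + f') = XM p q f + XM p q f' := by
  funext i j
  show _ = XM p q f i j + XM p q f' i j
  unfold XM
  split_ifs <;> simp <;> ring

lemma XM_smul (c : ℝ) (f) : XM p q (c • f) = c • XM p q f := by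
  funext i j
  show _ = c • XM p q f i j
  unfold XM
  split_ifs <;> simp [Complex.real_smul, _root_.map_mul, Complex.conj_ofReal] <;> ring

lemma YM_add (g g') : YM p q (g + g') = YM p q g + YM p q g' := by
  funext i j
  show _ = YM p q g i j + YM p q g' i j
  unfold YM
  split_ifs <;> simp

lemma YM_smul (c : ℝ) (g) : YM p q (c • g) = c • YM p q g := by
  funext i j
  show _ = c • YM p q g i j
  unfold YM
  split_ifs <;> simp [Complex.real_smul]

noncomputable def phiP : PP p q →ₗ[ℝ] Matrix (Fin (p+q) ⊕ Fin (p+q)) (Fin (p+q) ⊕ Fin (p+q)) ℂ where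
  toFun t := blk p q (XP p q t.1 t.2.1) (YP p q t.2.2)
  map_add' t s := by
    show blk p q (XP p q (t.1 + s.1) (t.2.1 + s.2.1)) (YP p q (t.2.2 + s.2.2)) = _
    rw [XP_add, YP_add, blk_add]
  map_smul' c t := by
    show blk p q (XP p q (c • t.1) (c • t.2.1)) (YP p q (c • t.2.2)) = _
    rw [XP_smul, YP_smul, blk_smul]
    rfl

noncomputable def phiM : PM p q →ₗ[ℝ] Matrix (Fin (p+q) ⊕ Fin (p+q)) (Fin (p+q) ⊕ Fin (p+q)) ℂ where
  toFun t := blk p q (XM p q t.1) (YM p q t.2)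
  map_add' t s := by
    show blk p q (XM p q (t.1 + s.1)) (YM p q (t.2 + s.2)) = _
    rw [XM_add, YM_add, blk_add]
  map_smul' c t := by
    show blk p q (XM p q (c • t.1)) (YM p q (c • t.2)) = _
    rw [XM_smul, YM_smul, blk_smul]
    rfl

end S12
end Part3
section Part4
open Matrix Complex
namespace S12

variable (p q : ℕ)

def idx : Fin (p+q) ⊕ Fin (p+q) → Fin (p+q) := Sum.elim id id

@[simp] lemma idx_inl (i) : idx p q (Sum.inl i) = i := rfl
@[simp] lemma idx_inr (i) : idx p q (Sum.inr i) = i := rfl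

@[simp] lemma blk_ll (X Y) (i j) : blk p q X Y (Sum.inl i) (Sum.inl j) = X i j := rfl
@[simp] lemma blk_lr (X Y) (i j) : blk p q X Y (Sum.inl i) (Sum.inr j) = -(Y i j) := rfl
@[simp] lemma blk_rl (X Y) (i j) : blk p q X Y (Sum.inr i) (Sum.inl j) = (starRingEnd ℂ) (Y i j) := rfl
@[simp] lemma blk_rr (X Y) (i j) : blk p q X Y (Sum.inr i) (Sum.inr j) = (starRingEnd ℂ) (X i j) := rfl

-- evaluation lemmas
lemma XP_lt (f v) {i j} (h : same p q i j ∧ i < j) : XP p q f v i j = f ⟨(i,j), h⟩ := by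
  unfold XP; rw [if_neg (ne_of_lt h.2), dif_pos h]

lemma XP_gt (f v) {i j} (h : same p q i j ∧ j < i) :
    XP p q f v i j = (starRingEnd ℂ) (f ⟨(j,i), ⟨same_symm p q h.1, h.2⟩⟩) := by
  unfold XP
  rw [if_neg (ne_of_gt h.2), dif_neg (fun hc : same p q i j ∧ i < j => absurd h.2 (not_lt_of_gt hc.2)),
    dif_pos h]

lemma YP_lt (g) {i j} (h : same p q i j ∧ i < j) : YP p q g i j = g ⟨(i,j), h⟩ := by
  unfold YP; rw [dif_pos h]

lemma YP_gt (g) {i j} (h : same p q i j ∧ j < i) :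
    YP p q g i j = -(g ⟨(j,i), ⟨same_symm p q h.1, h.2⟩⟩) := by
  unfold YP
  rw [dif_neg (fun hc : same p q i j ∧ i < j => absurd h.2 (not_lt_of_gt hc.2)), dif_pos h]

lemma YP_diag (g) (i) : YP p q g i i = 0 := by
  unfold YP
  rw [dif_neg (fun hc : same p q i i ∧ i < i => absurd hc.2 (lt_irrefl i)),
    dif_neg (fun hc : same p q i i ∧ i < i => absurd hc.2 (lt_irrefl i))]

lemma XM_mix1 (f) {i j : Fin (p+q)} (h : (i:ℕ) < p ∧ ¬ (j:ℕ) < p) : XM p q f i j = f ⟨(i,j), h⟩ := by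
  unfold XM; rw [dif_pos h]

lemma XM_mix2 (f) {i j : Fin (p+q)} (h : (j:ℕ) < p ∧ ¬ (i:ℕ) < p) :
    XM p q f i j = -((starRingEnd ℂ) (f ⟨(j,i), h⟩)) := by
  unfold XM; rw [dif_neg (fun hc : (i:ℕ) < p ∧ ¬ (j:ℕ) < p => h.2 hc.1), dif_pos h]

lemma YM_mix1 (g) {i j : Fin (p+q)} (h : (i:ℕ) < p ∧ ¬ (j:ℕ) < p) : YM p q g i j = g ⟨(i,j), h⟩ := by
  unfold YM; rw [dif_pos h]

lemma YM_mix2 (g) {i j : Fin (p+q)} (h : (j:ℕ) < p ∧ ¬ (i:ℕ) < p) : YM p q g i j = g ⟨(j,i), h⟩ := by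
  unfold YM; rw [dif_neg (fun hc : (i:ℕ) < p ∧ ¬ (j:ℕ) < p => h.2 hc.1), dif_pos h]

-- symmetry of blk
lemma blk_sym_plus (X Y : Matrix (Fin (p+q)) (Fin (p+q)) ℂ)
    (hX : ∀ i j, X j i = (starRingEnd ℂ) (X i j)) (hY : ∀ i j, Y j i = -(Y i j)) :
    ∀ x y, blk p q X Y y x = (starRingEnd ℂ) (blk p q X Y x y) := by
  rintro (i | i) (j | j) <;> simp [hX i j, hY i j]

lemma blk_sym_minus (X Y : Matrix (Fin (p+q)) (Fin (p+q)) ℂ)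
    (hX : ∀ i j, X j i = -((starRingEnd ℂ) (X i j))) (hY : ∀ i j, Y j i = Y i j) :
    ∀ x y, blk p q X Y y x = -((starRingEnd ℂ) (blk p q X Y x y)) := by
  rintro (i | i) (j | j) <;> simp [hX i j, hY i j]

-- support
lemma blk_supp (P : Fin (p+q) → Fin (p+q) → Prop) (X Y : Matrix (Fin (p+q)) (Fin (p+q)) ℂ)
    (hX : ∀ i j, P i j → X i j = 0) (hY : ∀ i j, P i j → Y i j = 0)
    (x y) (h : P (idx p q x) (idx p q y)) : blk p q X Y x y = 0 := by
  rcases x with i | i <;> rcases y with j | j <;>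
    simp only [idx_inl, idx_inr] at h <;> simp [hX i j h, hY i j h]

-- symmetry/support of phiP, phiM images
lemma XP_herm (f v) : ∀ i j, XP p q f v j i = (starRingEnd ℂ) (XP p q f v i j) :=
  fun i j => XP_conj p q f v i j

lemma phiP_sym (t : PP p q) :
    ∀ x y, phiP p q t y x = (starRingEnd ℂ) (phiP p q t x y) :=
  blk_sym_plus p q _ _ (XP_conj p q t.1 t.2.1) (YP_anti p q t.2.2)

lemma phiM_sym (s : PM p q) :
    ∀ x y, phiM p q s y x = -((starRingEnd ℂ) (phiM p q s x y)) :=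
  blk_sym_minus p q _ _ (XM_conj p q s.1) (YM_symm p q s.2)

lemma phiP_supp (t : PP p q) :
    ∀ x y, ¬ same p q (idx p q x) (idx p q y) → phiP p q t x y = 0 :=
  fun x y h => blk_supp p q (fun i j => ¬ same p q i j) _ _
    (fun _ _ hh => XP_not_same p q _ _ hh) (fun _ _ hh => YP_not_same p q _ hh) x y h

lemma phiM_supp (s : PM p q) :
    ∀ x y, same p q (idx p q x) (idx p q y) → phiM p q s x y = 0 :=
  fun x y h => blk_supp p q (fun i j => same p q i j) _ _
    (fun _ _ hh => XM_same p q _ hh) (fun _ _ hh => YM_same p q _ hh) x y h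

-- trace formulas
lemma trace_mul_eq (V W : Matrix (Fin (p+q) ⊕ Fin (p+q)) (Fin (p+q) ⊕ Fin (p+q)) ℂ) :
    Matrix.trace (V * W) = ∑ x, ∑ y, V x y * W y x := by
  simp [Matrix.trace, Matrix.diag, Matrix.mul_apply]

lemma trace_sq_plus (a : Matrix (Fin (p+q) ⊕ Fin (p+q)) (Fin (p+q) ⊕ Fin (p+q)) ℂ)
    (h : ∀ x y, a y x = (starRingEnd ℂ) (a x y)) :
    (Matrix.trace (a * a)).re = ∑ x, ∑ y, Complex.normSq (a x y) := by
  rw [trace_mul_eq]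
  have e : ∀ x y : Fin (p+q) ⊕ Fin (p+q), a x y * a y x = (Complex.normSq (a x y) : ℂ) :=
    fun x y => by rw [h x y, Complex.mul_conj]
  simp_rw [e]
  norm_cast

lemma trace_sq_minus (a : Matrix (Fin (p+q) ⊕ Fin (p+q)) (Fin (p+q) ⊕ Fin (p+q)) ℂ)
    (h : ∀ x y, a y x = -((starRingEnd ℂ) (a x y))) :
    (Matrix.trace (a * a)).re = -∑ x, ∑ y, Complex.normSq (a x y) := by
  rw [trace_mul_eq]
  have e : ∀ x y : Fin (p+q) ⊕ Fin (p+q), a x y * a y x = -(Complex.normSq (a x y) : ℂ) :=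
    fun x y => by rw [h x y, mul_neg, Complex.mul_conj]
  simp_rw [e, Finset.sum_neg_distrib]
  rw [Complex.neg_re]
  norm_cast

lemma trace_mul_mixed_zero (a b : Matrix (Fin (p+q) ⊕ Fin (p+q)) (Fin (p+q) ⊕ Fin (p+q)) ℂ)
    (ha : ∀ x y, ¬ same p q (idx p q x) (idx p q y) → a x y = 0)
    (hb : ∀ x y, same p q (idx p q x) (idx p q y) → b x y = 0) :
    Matrix.trace (a * b) = 0 := by
  rw [trace_mul_eq]
  refine Finset.sum_eq_zero (fun x _ => Finset.sum_eq_zero (fun y _ => ?_))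
  by_cases h : same p q (idx p q x) (idx p q y)
  · rw [hb y x (same_symm p q h), mul_zero]
  · rw [ha x y h, zero_mul]

end S12
end Part4
section Part5
open Matrix Complex
namespace S12

variable (p q : ℕ)

lemma dd_mul_self' (i : Fin (p+q)) : dd p q i * dd p q i = 1 := dd_mul_self p q i

lemma decompX {X : Matrix (Fin (p+q)) (Fin (p+q)) ℂ}
    (hX' : ∀ i j, X j i = dd p q i * dd p q j * (starRingEnd ℂ) (X i j)) :
    X = XP p q (fun u => X u.1.1 u.1.2) (fun i => (X i i).re)
          + XM p q (fun u => X u.1.1 u.1.2) := by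
  funext i j
  show X i j = XP p q _ _ i j + XM p q _ i j
  by_cases hs : same p q i j
  · rw [XM_same p q _ hs, add_zero]
    rcases lt_trichotomy i j with h | h | h
    · rw [XP_lt p q _ _ ⟨hs, h⟩]
    · subst h
      rw [XP_diag]
      have h1 := hX' i i
      rw [dd_mul_self', one_mul] at h1
      exact (Complex.conj_eq_iff_re.mp h1.symm).symm
    · rw [XP_gt p q _ _ ⟨hs, h⟩]
      have h1 := hX' i j
      -- X j i = dd i dd j conj (X i j); conj both sides
      have h2 : (starRingEnd ℂ) (X j i) = X i j := by
        rw [h1, _root_.map_mul, _root_.map_mul, conj_dd, conj_dd, Complex.conj_conj,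
          dd_mul_same p q hs, one_mul]
      exact h2.symm
  · rw [XP_not_same p q _ _ hs, zero_add]
    by_cases hi : (i:ℕ) < p
    · have hj : ¬ (j:ℕ) < p := fun hh => hs (iff_of_true hi hh)
      rw [XM_mix1 p q _ ⟨hi, hj⟩]
    · have hj : (j:ℕ) < p := by by_contra hh; exact hs (iff_of_false hi hh)
      rw [XM_mix2 p q _ ⟨hj, hi⟩]
      have h1 := hX' i j
      have h2 : (starRingEnd ℂ) (X j i) = dd p q i * dd p q j * X i j := by
        rw [h1, _root_.map_mul, _root_.map_mul, conj_dd, conj_dd, Complex.conj_conj]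
      rw [h2, dd_mul_not_same p q hs]
      ring

lemma decompY {Y : Matrix (Fin (p+q)) (Fin (p+q)) ℂ}
    (hY' : ∀ i j, Y j i = -(dd p q i * dd p q j) * Y i j) :
    Y = YP p q (fun u => Y u.1.1 u.1.2) + YM p q (fun u => Y u.1.1 u.1.2) := by
  funext i j
  show Y i j = YP p q _ i j + YM p q _ i j
  by_cases hs : same p q i j
  · rw [YM_same p q _ hs, add_zero]
    rcases lt_trichotomy i j with h | h | h
    · rw [YP_lt p q _ ⟨hs, h⟩]
    · subst h
      rw [YP_diag]
      have h1 := hY' i i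
      rw [dd_mul_self'] at h1
      linear_combination h1 / 2
    · rw [YP_gt p q _ ⟨hs, h⟩]
      have h1 := hY' i j
      rw [h1, dd_mul_same p q hs]
      ring
  · rw [YP_not_same p q _ hs, zero_add]
    by_cases hi : (i:ℕ) < p
    · have hj : ¬ (j:ℕ) < p := fun hh => hs (iff_of_true hi hh)
      rw [YM_mix1 p q _ ⟨hi, hj⟩]
    · have hj : (j:ℕ) < p := by by_contra hh; exact hs (iff_of_false hi hh)
      rw [YM_mix2 p q _ ⟨hj, hi⟩]
      have h1 := hY' i j
      rw [h1, dd_mul_not_same p q hs]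
      ring

/-- every element of `mSp` decomposes -/
lemma decomp {W} (hW : W ∈ mSp p q) :
    ∃ t : PP p q, (∑ i, t.2.1 i = 0) ∧ ∃ s : PM p q, W = phiP p q t + phiM p q s := by
  obtain ⟨X, Y, htr, hX, hY, rfl⟩ := hW
  have hX' := herm' p q hX
  have hY' := skew' p q hY
  refine ⟨⟨fun u => X u.1.1 u.1.2, fun i => (X i i).re, fun u => Y u.1.1 u.1.2⟩, ?_, 
    ⟨fun u => X u.1.1 u.1.2, fun u => Y u.1.1 u.1.2⟩, ?_⟩
  · have : (Matrix.trace X).re = 0 := by rw [htr]; simp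
    rw [← this]
    simp [Matrix.trace, Matrix.diag, Complex.re_sum]
  · show blk p q X Y = _
    have eX := decompX p q hX'
    have eY := decompY p q hY'
    calc blk p q X Y = blk p q (XP p q _ _ + XM p q _) (YP p q _ + YM p q _) := by
          rw [← eX, ← eY]
      _ = _ := by rw [blk_add]; rfl

/-- injectivity of phiP -/
lemma phiP_inj : Function.Injective (phiP p q) := by
  rw [← LinearMap.ker_eq_bot]
  rw [Submodule.eq_bot_iff]
  rintro ⟨f, v, g⟩ ht
  have h : blk p q (XP p q f v) (YP p q g) = 0 := ht
  have hf : f = 0 := by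
    funext u
    obtain ⟨⟨i, j⟩, hu⟩ := u
    have := congrFun (congrFun h (Sum.inl i)) (Sum.inl j)
    rw [blk_ll, XP_lt p q f v hu] at this
    exact this
  have hg : g = 0 := by
    funext u
    obtain ⟨⟨i, j⟩, hu⟩ := u
    have := congrFun (congrFun h (Sum.inl i)) (Sum.inr j)
    rw [blk_lr, YP_lt p q g hu] at this
    simpa using this
  have hv : v = 0 := by
    funext i
    have := congrFun (congrFun h (Sum.inl i)) (Sum.inl i)
    rw [blk_ll, XP_diag] at this
    have h0 : ((v i) : ℂ) = 0 := by simpa using this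
    have h1 : v i = 0 := by exact_mod_cast h0
    simpa using h1
  show ((f, v, g) : PP p q) = 0
  rw [hf, hg, hv]; rfl

/-- injectivity of phiM -/
lemma phiM_inj : Function.Injective (phiM p q) := by
  rw [← LinearMap.ker_eq_bot]
  rw [Submodule.eq_bot_iff]
  rintro ⟨f, g⟩ ht
  have h : blk p q (XM p q f) (YM p q g) = 0 := ht
  have hf : f = 0 := by
    funext u
    obtain ⟨⟨i, j⟩, hu⟩ := u
    have := congrFun (congrFun h (Sum.inl i)) (Sum.inl j)
    rw [blk_ll, XM_mix1 p q f hu] at this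
    exact this
  have hg : g = 0 := by
    funext u
    obtain ⟨⟨i, j⟩, hu⟩ := u
    have := congrFun (congrFun h (Sum.inl i)) (Sum.inr j)
    rw [blk_lr, YM_mix1 p q g hu] at this
    simpa using this
  show ((f, g) : PM p q) = 0
  rw [hf, hg]; rfl

end S12
end Part5
section Part6
open Matrix Complex Module
namespace S12

def eLT (m : ℕ) : {z : Fin m × Fin m // z.1 < z.2} ≃ Σ j : Fin m, Fin (j : ℕ) where
  toFun z := ⟨z.1.2, ⟨z.1.1.1, z.2⟩⟩
  invFun s := ⟨(⟨s.2.1, lt_trans s.2.2 s.1.2⟩, s.1), s.2.2⟩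
  left_inv z := rfl
  right_inv s := rfl

lemma two_card_lt (m : ℕ) :
    Fintype.card {z : Fin m × Fin m // z.1 < z.2} * 2 = m * (m - 1) := by
  rw [Fintype.card_congr (eLT m), Fintype.card_sigma]
  simp only [Fintype.card_fin]
  rw [Fin.sum_univ_eq_sum_range (fun i => i) m]
  exact Finset.sum_range_id_mul_two m

variable (p q : ℕ)

def eUp : UpS p q ≃ ({z : Fin p × Fin p // z.1 < z.2} ⊕ {z : Fin q × Fin q // z.1 < z.2}) where
  toFun u :=
    if h : (u.1.1 : ℕ) < p then
      Sum.inl ⟨(⟨u.1.1.1, h⟩, ⟨u.1.2.1, (u.2.1 : ((u.1.1:ℕ) < p ↔ (u.1.2:ℕ) < p)).mp h⟩),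
        u.2.2⟩
    else
      Sum.inr ⟨(⟨u.1.1.1 - p, by have := u.1.1.isLt; omega⟩,
        ⟨u.1.2.1 - p, by
          have h2 : ¬ ((u.1.2 : ℕ) < p) :=
            fun hh => h ((u.2.1 : ((u.1.1:ℕ) < p ↔ (u.1.2:ℕ) < p)).mpr hh)
          have := u.1.2.isLt; omega⟩),
        by
          apply Fin.mk_lt_mk.mpr
          have h3 : (u.1.1 : ℕ) < (u.1.2 : ℕ) := u.2.2
          omega⟩
  invFun z :=
    match z with
    | Sum.inl ⟨(a, b), hab⟩ =>
      ⟨(⟨a.1, by have := a.isLt; omega⟩, ⟨b.1, by have := b.isLt; omega⟩),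
        (iff_of_true a.isLt b.isLt : ((a.1:ℕ) < p ↔ (b.1:ℕ) < p)),
        Fin.mk_lt_mk.mpr hab⟩
    | Sum.inr ⟨(a, b), hab⟩ =>
      ⟨(⟨p + a.1, by have := a.isLt; omega⟩, ⟨p + b.1, by have := b.isLt; omega⟩),
        (iff_of_false (by omega) (by omega) : (p + (a.1:ℕ) < p ↔ p + (b.1:ℕ) < p)),
        Fin.mk_lt_mk.mpr (by have : (a:ℕ) < (b:ℕ) := hab; omega)⟩
  left_inv u := by
    obtain ⟨⟨⟨i, hi⟩, ⟨j, hj⟩⟩, hs, hlt⟩ := u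
    by_cases h : i < p
    · simp only [dif_pos h]
    · simp only [dif_neg h]
      have h2 : ¬ (j < p) := fun hh => h ((hs : (i < p ↔ j < p)).mpr hh)
      refine Subtype.ext (Prod.ext ?_ ?_) <;> apply Fin.ext <;> dsimp <;> omega
  right_inv z := by
    rcases z with ⟨⟨a, b⟩, hab⟩ | ⟨⟨a, b⟩, hab⟩
    · simp only [dif_pos a.isLt]
    · have hcond : ¬ ((p + a.1) < p) := by omega
      simp only [dif_neg hcond]
      congr 1
      refine Subtype.ext (Prod.ext ?_ ?_) <;> apply Fin.ext <;> dsimp <;> omega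

def eUm : UmS p q ≃ Fin p × Fin q where
  toFun u := (⟨u.1.1.1, u.2.1⟩, ⟨u.1.2.1 - p, by have := u.1.2.isLt; have := u.2.2; omega⟩)
  invFun z :=
    ⟨(⟨z.1.1, by have := z.1.isLt; omega⟩, ⟨p + z.2.1, by have := z.2.isLt; omega⟩),
      z.1.isLt, by simp⟩
  left_inv u := by
    obtain ⟨⟨⟨i, hi⟩, ⟨j, hj⟩⟩, h1, h2⟩ := u
    dsimp only at h1 h2
    refine Subtype.ext (Prod.ext ?_ ?_) <;> apply Fin.ext <;> dsimp <;> omega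
  right_inv z := by
    rcases z with ⟨a, b⟩
    refine Prod.ext ?_ ?_ <;> apply Fin.ext <;> dsimp <;> omega

lemma card_UmS : Fintype.card (UmS p q) = p * q := by
  rw [Fintype.card_congr (eUm p q)]
  simp

lemma two_card_UpS : Fintype.card (UpS p q) * 2 = p * (p - 1) + q * (q - 1) := by
  rw [Fintype.card_congr (eUp p q), Fintype.card_sum, add_mul, two_card_lt, two_card_lt]

lemma finrank_fun_complex (ι : Type) [Fintype ι] :
    Module.finrank ℝ (ι → ℂ) = Fintype.card ι * 2 := by
  rw [Module.finrank_pi_fintype]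
  simp [Complex.finrank_real_complex, Finset.sum_const, Finset.card_univ, mul_comm]

lemma finrank_PP : Module.finrank ℝ (PP p q) = Fintype.card (UpS p q) * 2 * 2 + (p + q) := by
  show Module.finrank ℝ ((UpS p q → ℂ) × (Fin (p+q) → ℝ) × (UpS p q → ℂ)) = _
  rw [Module.finrank_prod, Module.finrank_prod, finrank_fun_complex, Module.finrank_pi]
  rw [Fintype.card_fin]
  ring

lemma finrank_PM : Module.finrank ℝ (PM p q) = 4 * (p * q) := by
  show Module.finrank ℝ ((UmS p q → ℂ) × (UmS p q → ℂ)) = _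
  rw [Module.finrank_prod, finrank_fun_complex, card_UmS]
  ring

end S12
end Part6

section Part7
open Matrix Complex Module
namespace S12

variable (p q : ℕ)

noncomputable def ell :
    Matrix (Fin (p+q) ⊕ Fin (p+q)) (Fin (p+q) ⊕ Fin (p+q)) ℂ →ₗ[ℝ] ℝ :=
  Complex.reLm.comp ((Matrix.traceLinearMap (Fin (p+q) ⊕ Fin (p+q)) ℂ ℂ).restrictScalars ℝ)

lemma ell_phiP (t : PP p q) : ell p q (phiP p q t) = 2 * ∑ i, t.2.1 i := by
  show (Matrix.trace (blk p q (XP p q t.1 t.2.1) (YP p q t.2.2))).re = _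
  rw [trace_blk, trace_XP]
  simp [Complex.add_re, Complex.conj_ofReal]
  ring

lemma sum_normSq_pos (a : Matrix (Fin (p+q) ⊕ Fin (p+q)) (Fin (p+q) ⊕ Fin (p+q)) ℂ)
    (h : a ≠ 0) : 0 < ∑ x, ∑ y, Complex.normSq (a x y) := by
  have hxy : ∃ x y, a x y ≠ 0 := by
    by_contra hc
    push_neg at hc
    exact h (by funext x y; exact hc x y)
  obtain ⟨x, y, hxy⟩ := hxy
  refine Finset.sum_pos' (fun x _ => Finset.sum_nonneg (fun y _ => Complex.normSq_nonneg _))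
    ⟨x, Finset.mem_univ x, ?_⟩
  exact Finset.sum_pos' (fun y _ => Complex.normSq_nonneg _)
    ⟨y, Finset.mem_univ y, Complex.normSq_pos.mpr hxy⟩

lemma sum_normSq_nonneg (a : Matrix (Fin (p+q) ⊕ Fin (p+q)) (Fin (p+q) ⊕ Fin (p+q)) ℂ) :
    0 ≤ ∑ x, ∑ y, Complex.normSq (a x y) :=
  Finset.sum_nonneg (fun x _ => Finset.sum_nonneg (fun y _ => Complex.normSq_nonneg _))

lemma mSp_add {A A'} (hA : A ∈ mSp p q) (hA' : A' ∈ mSp p q) : A + A' ∈ mSp p q := by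
  obtain ⟨X1, Y1, t1, c1, s1, rfl⟩ := hA
  obtain ⟨X2, Y2, t2, c2, s2, rfl⟩ := hA'
  refine ⟨X1 + X2, Y1 + Y2, ?_, ?_, ?_, ?_⟩
  · rw [Matrix.trace_add, t1, t2, add_zero]
  · rw [Matrix.conjTranspose_add, add_mul, c1, c2, mul_add]
  · rw [Matrix.transpose_add, add_mul, mul_add, add_add_add_comm, s1, s2, add_zero]
  · show _ = blk p q (X1 + X2) (Y1 + Y2)
    rw [blk_add]
    rfl

lemma arith1 (hp : 1 ≤ p) (hq : 1 ≤ q) :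
    (p * (2*p - 1) + q * (2*q - 1) - 1) + 4 * p * q = (2*(p+q)+1) * (p+q-1) := by
  obtain ⟨p', rfl⟩ : ∃ p', p = p' + 1 := ⟨p - 1, by omega⟩
  obtain ⟨q', rfl⟩ : ∃ q', q = q' + 1 := ⟨q - 1, by omega⟩
  have e1 : 2 * (p' + 1) - 1 = 2*p' + 1 := by omega
  have e2 : 2 * (q' + 1) - 1 = 2*q' + 1 := by omega
  have e3 : (p' + 1) + (q' + 1) - 1 = p' + q' + 1 := by omega
  rw [e1, e2, e3]
  have h1 : (p'+1) * (2*p'+1) = 2*(p'*p') + 3*p' + 1 := by ring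
  have h2 : (q'+1) * (2*q'+1) = 2*(q'*q') + 3*q' + 1 := by ring
  have h3 : 4 * (p'+1) * (q'+1) = 4*(p'*q') + 4*p' + 4*q' + 4 := by ring
  have h4 : (2*((p'+1)+(q'+1))+1) * (p'+q'+1)
      = 2*(p'*p') + 2*(q'*q') + 4*(p'*q') + 7*p' + 7*q' + 5 := by ring
  rw [h1, h2, h3, h4]
  generalize p'*p' = A
  generalize q'*q' = B
  generalize p'*q' = C
  omega

lemma arith2 (cU : ℕ) (hp : 1 ≤ p) (hq : 1 ≤ q) (h : cU * 2 = p*(p-1) + q*(q-1)) :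
    cU * 2 * 2 + (p + q) - 1 = p * (2*p - 1) + q * (2*q - 1) - 1 := by
  obtain ⟨p', rfl⟩ : ∃ p', p = p' + 1 := ⟨p - 1, by omega⟩
  obtain ⟨q', rfl⟩ : ∃ q', q = q' + 1 := ⟨q - 1, by omega⟩
  have e1 : 2 * (p' + 1) - 1 = 2*p' + 1 := by omega
  have e2 : 2 * (q' + 1) - 1 = 2*q' + 1 := by omega
  have e3 : (p' + 1) - 1 = p' := by omega
  have e4 : (q' + 1) - 1 = q' := by omega
  rw [e1, e2]
  rw [e3, e4] at h
  have h1 : (p'+1) * p' = p'*p' + p' := by ring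
  have h2 : (q'+1) * q' = q'*q' + q' := by ring
  have h3 : (p'+1) * (2*p'+1) = 2*(p'*p') + 3*p' + 1 := by ring
  have h4 : (q'+1) * (2*q'+1) = 2*(q'*q') + 3*q' + 1 := by ring
  rw [h1, h2] at h
  rw [h3, h4]
  generalize hA : p'*p' = A at h ⊢
  generalize hB : q'*q' = B at h ⊢
  omega

end S12
end Part7


open Matrix S12 Module

/-- The form `B(V,W) = ½·Re tr(V·W)` on `𝔪` is nondegenerate of
signature `(p(2p−1) + q(2q−1) − 1, 4pq)`; in particular `𝔪` has real dimension
`(2n+1)(n−1)` for `n = p + q`. -/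
theorem stmt12 (p q : ℕ) (hp : 1 ≤ p) (hq : 1 ≤ q)
    (B : Matrix (Fin (p + q) ⊕ Fin (p + q)) (Fin (p + q) ⊕ Fin (p + q)) ℂ →
      Matrix (Fin (p + q) ⊕ Fin (p + q)) (Fin (p + q) ⊕ Fin (p + q)) ℂ → ℝ)
    (hB : B = fun V W => (Matrix.trace (V * W)).re / 2) :
    -- `𝔪` has real dimension `(2n+1)(n−1)`
    Module.finrank ℝ ↥(Submodule.span ℝ (mSp p q)) = (2 * (p + q) + 1) * (p + q - 1) ∧
    -- `B` is nondegenerate on `𝔪`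
    (∀ X ∈ mSp p q, (∀ Y ∈ mSp p q, B X Y = 0) → X = 0) ∧
    -- signature `(p(2p−1) + q(2q−1) − 1, 4pq)`
    (∃ Vp Vm : Submodule ℝ
        (Matrix (Fin (p + q) ⊕ Fin (p + q)) (Fin (p + q) ⊕ Fin (p + q)) ℂ),
      (Vp : Set _) ⊆ mSp p q ∧
      (Vm : Set _) ⊆ mSp p q ∧
      (∀ X ∈ mSp p q, ∃ a ∈ Vp, ∃ b ∈ Vm, X = a + b) ∧
      (∀ X, X ∈ Vp → X ∈ Vm → X = 0) ∧
      (∀ a ∈ Vp, ∀ b ∈ Vm, B a b = 0) ∧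
      (∀ a ∈ Vp, a ≠ 0 → 0 < B a a) ∧
      (∀ b ∈ Vm, b ≠ 0 → B b b < 0) ∧
      Module.finrank ℝ ↥Vp = p * (2 * p - 1) + q * (2 * q - 1) - 1 ∧
      Module.finrank ℝ ↥Vm = 4 * p * q) := by
  subst hB
  set ellP : PP p q →ₗ[ℝ] ℝ := (ell p q).comp (phiP p q) with hellP
  set K : Submodule ℝ (PP p q) := LinearMap.ker ellP with hK
  set Vp : Submodule ℝ _ := K.map (phiP p q) with hVpdef
  set Vm : Submodule ℝ _ := LinearMap.range (phiM p q) with hVmdef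
  have hVp_sub : (Vp : Set _) ⊆ mSp p q := by
    rintro _ ⟨t, htK, rfl⟩
    have h0 : ellP t = 0 := htK
    rw [hellP, LinearMap.comp_apply, ell_phiP] at h0
    have hv : ∑ i, t.2.1 i = 0 := by linarith
    exact memP p q t.1 t.2.1 t.2.2 hv
  have hVm_sub : (Vm : Set _) ⊆ mSp p q := by
    rintro _ ⟨s, rfl⟩
    exact memM p q s.1 s.2
  have hdecomp : ∀ X ∈ mSp p q, ∃ a ∈ Vp, ∃ b ∈ Vm, X = a + b := by
    intro X hX
    obtain ⟨t, hv, s, hXs⟩ := decomp p q hX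
    refine ⟨phiP p q t, Submodule.mem_map_of_mem ?_, phiM p q s, ⟨s, rfl⟩, hXs⟩
    show ellP t = 0
    rw [hellP, LinearMap.comp_apply, ell_phiP, hv, mul_zero]
  have hindep : ∀ X, X ∈ Vp → X ∈ Vm → X = 0 := by
    rintro X hXp hXm
    obtain ⟨t, _, rfl⟩ := hXp
    obtain ⟨s, hs⟩ := hXm
    funext x y
    by_cases h : same p q (idx p q x) (idx p q y)
    · rw [← hs]; exact phiM_supp p q s x y h
    · exact phiP_supp p q t x y h
  have hortho : ∀ a ∈ Vp, ∀ b ∈ Vm, (Matrix.trace (a * b)).re / 2 = 0 := by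
    rintro _ ⟨t, _, rfl⟩ _ ⟨s, rfl⟩
    rw [trace_mul_mixed_zero p q _ _ (phiP_supp p q t) (phiM_supp p q s)]
    simp
  have hBpos : ∀ a ∈ Vp, a ≠ 0 → 0 < (Matrix.trace (a * a)).re / 2 := by
    rintro _ ⟨t, _, rfl⟩ hne
    rw [trace_sq_plus p q _ (phiP_sym p q t)]
    have := sum_normSq_pos p q _ hne
    linarith
  have hBneg : ∀ b ∈ Vm, b ≠ 0 → (Matrix.trace (b * b)).re / 2 < 0 := by
    rintro _ ⟨s, rfl⟩ hne
    rw [trace_sq_minus p q _ (phiM_sym p q s)]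
    have := sum_normSq_pos p q _ hne
    linarith
  have hVm_dim : Module.finrank ℝ ↥Vm = 4 * p * q := by
    rw [hVmdef, LinearMap.finrank_range_of_inj (phiM_inj p q), finrank_PM, mul_assoc]
  have hVp_dim : Module.finrank ℝ ↥Vp = p * (2 * p - 1) + q * (2 * q - 1) - 1 := by
    have hiso := (LinearEquiv.finrank_eq
      (Submodule.equivMapOfInjective (phiP p q) (phiP_inj p q) K)).symm
    have hsurj : Function.Surjective ellP := by
      intro r
      have hnept : (0:ℝ) < ((p+q : ℕ) : ℝ) := by
        have h1 : 0 < p + q := by omega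
        exact_mod_cast h1
      refine ⟨(r / (2*((p+q : ℕ) : ℝ))) • ((0, fun _ => 1, 0) : PP p q), ?_⟩
      refine (ellP.map_smul _ _).trans ?_
      rw [hellP]
      erw [LinearMap.comp_apply, ell_phiP]
      have hsum : (∑ _i : Fin (p+q), (1:ℝ)) = ((p+q : ℕ) : ℝ) := by simp
      rw [hsum, smul_eq_mul]
      field_simp
    have hrange : LinearMap.range ellP = ⊤ := LinearMap.range_eq_top.mpr hsurj
    have hrk := LinearMap.finrank_range_add_finrank_ker ellP
    rw [hrange, finrank_top, finrank_self, ← hK] at hrk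
    have hPP := finrank_PP p q
    have hcU := two_card_UpS p q
    have harith := arith2 p q (Fintype.card (UpS p q)) hp hq hcU
    calc Module.finrank ℝ ↥Vp = Module.finrank ℝ ↥K := by rw [hVpdef]; exact hiso
      _ = Fintype.card (UpS p q) * 2 * 2 + (p + q) - 1 := by omega
      _ = p * (2 * p - 1) + q * (2 * q - 1) - 1 := harith
  -- span equals Vp ⊔ Vm
  have hspan : Submodule.span ℝ (mSp p q) = Vp ⊔ Vm := by
    apply le_antisymm
    · rw [Submodule.span_le]
      intro W hW
      obtain ⟨a, ha, b, hb, rfl⟩ := hdecomp W hW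
      exact Submodule.add_mem _ (Submodule.mem_sup_left ha) (Submodule.mem_sup_right hb)
    · exact sup_le (fun x hx => Submodule.subset_span (hVp_sub hx))
        (fun x hx => Submodule.subset_span (hVm_sub hx))
  have hinf : Vp ⊓ Vm = ⊥ := by
    rw [Submodule.eq_bot_iff]
    intro x hx
    exact hindep x hx.1 hx.2
  have hsumrank := Submodule.finrank_sup_add_finrank_inf_eq Vp Vm
  rw [hinf, finrank_bot, add_zero] at hsumrank
  refine ⟨?_, ?_, Vp, Vm, hVp_sub, hVm_sub, hdecomp, hindep, hortho, hBpos, hBneg,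
    hVp_dim, hVm_dim⟩
  · rw [hspan, hsumrank, hVp_dim, hVm_dim]
    exact arith1 p q hp hq
  · intro X hX hzero
    obtain ⟨a, ha, b, hb, rfl⟩ := hdecomp X hX
    obtain ⟨t, htK, rfl⟩ := ha
    obtain ⟨s, rfl⟩ := hb
    have hmem : phiP p q t + -(phiM p q s) ∈ mSp p q := by
      have h1 : phiP p q t ∈ mSp p q := hVp_sub (Submodule.mem_map_of_mem htK)
      have h2 : -(phiM p q s) ∈ mSp p q := by
        rw [← map_neg]
        exact memM p q (-s).1 (-s).2
      exact mSp_add p q h1 h2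
    have h0 : (Matrix.trace ((phiP p q t + phiM p q s) * (phiP p q t + -(phiM p q s)))).re / 2
        = 0 := hzero _ hmem
    have hab : Matrix.trace (phiP p q t * phiM p q s) = 0 :=
      trace_mul_mixed_zero p q _ _ (phiP_supp p q t) (phiM_supp p q s)
    have hba : Matrix.trace (phiM p q s * phiP p q t) = 0 := by
      rw [Matrix.trace_mul_comm]; exact hab
    have expand : (phiP p q t + phiM p q s) * (phiP p q t + -(phiM p q s))
        = phiP p q t * phiP p q t - phiP p q t * phiM p q s
          + (phiM p q s * phiP p q t - phiM p q s * phiM p q s) := by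
      noncomm_ring
    have key : (Matrix.trace ((phiP p q t + phiM p q s) * (phiP p q t + -(phiM p q s)))).re
        = (∑ x, ∑ y, Complex.normSq (phiP p q t x y))
          + (∑ x, ∑ y, Complex.normSq (phiM p q s x y)) := by
      rw [expand, Matrix.trace_add, Matrix.trace_sub, Matrix.trace_sub, hab, hba,
        sub_zero, zero_sub, Complex.add_re, Complex.neg_re,
        trace_sq_plus p q _ (phiP_sym p q t), trace_sq_minus p q _ (phiM_sym p q s)]
      ring
    rw [key] at h0
    have hSa := sum_normSq_nonneg p q (phiP p q t)
    have hSb := sum_normSq_nonneg p q (phiM p q s)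
    have ha0 : phiP p q t = 0 := by
      by_contra hne
      have := sum_normSq_pos p q _ hne
      linarith
    have hb0 : phiM p q s = 0 := by
      by_contra hne
      have := sum_normSq_pos p q _ hne
      linarith
    rw [ha0, hb0, add_zero]
end

section
/- For all z₁, z₂, y₁, y₂, y₃, z₁′, z₂′, y₁′, y₂′, y₃′ ∈ ℂ and s₁, s₂, s₁′, s₂′ ∈ ℝ one has K( ν̂(z₁,z₂,s₁,−s₂,y₁,y₂,y₃), ν̂(z₁′,z₂′,s₁′,−s₂′,y₁′,y₂′,y₃′) ) = K( ν(z₁,z₂,s₁,s₂,y₁,y₂,y₃), ν(z₁′,z₂′,s₁′,s₂′,y₁′,y₂′,y₃′) ). In other words, the real-linear bijection 𝔫 → 𝔫̂ sending ν(z₁,z₂,s₁,s₂,y₁,y₂,y₃) to ν̂(z₁,z₂,s₁,−s₂,y₁,y₂,y₃) is an isometry for the form K. -/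
open Matrix

/-- The form `K(V,W) = ½·Re tr(V·W)`. -/
noncomputable def Kform (V W : Matrix (Fin 3 ⊕ Fin 3) (Fin 3 ⊕ Fin 3) ℂ) : ℝ :=
  (Matrix.trace (V * W)).re / 2

/-- `ν(z₁,z₂,s₁,s₂,y₁,y₂,y₃)`: the block matrix `[[X, −Y],[Ȳ, X̄]]` with
`X` having rows `(0, z₁, is₁)`, `(z₂, 0, −conj z₁)`, `(is₂, −conj z₂, 0)` and
`Y` having rows `(y₁, y₂, 0)`, `(y₃, 0, y₂)`, `(0, y₃, y₁)`. -/
noncomputable def nuMat (z₁ z₂ : ℂ) (s₁ s₂ : ℝ) (y₁ y₂ y₃ : ℂ) :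
    Matrix (Fin 3 ⊕ Fin 3) (Fin 3 ⊕ Fin 3) ℂ :=
  Matrix.fromBlocks
    (!![0, z₁, Complex.I * (s₁ : ℂ);
        z₂, 0, -(starRingEnd ℂ) z₁;
        Complex.I * (s₂ : ℂ), -(starRingEnd ℂ) z₂, 0])
    (-(!![y₁, y₂, 0; y₃, 0, y₂; 0, y₃, y₁]))
    ((!![y₁, y₂, 0; y₃, 0, y₂; 0, y₃, y₁]).map (starRingEnd ℂ))
    ((!![0, z₁, Complex.I * (s₁ : ℂ);
        z₂, 0, -(starRingEnd ℂ) z₁;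
        Complex.I * (s₂ : ℂ), -(starRingEnd ℂ) z₂, 0]).map (starRingEnd ℂ))

/-- `ν̂(x₁,x₂,a₁,a₂,w₁,w₂,w₃)`: the block matrix `[[X, −Y],[Ȳ, X̄]]` with
`X` having rows `(0, x₁, a₁)`, `(x₂, 0, conj x₁)`, `(a₂, conj x₂, 0)` and
`Y` having rows `(w₁, w₂, 0)`, `(w₃, 0, −w₂)`, `(0, −w₃, −w₁)`. -/
noncomputable def nuHat (x₁ x₂ : ℂ) (a₁ a₂ : ℝ) (w₁ w₂ w₃ : ℂ) :
    Matrix (Fin 3 ⊕ Fin 3) (Fin 3 ⊕ Fin 3) ℂ :=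
  Matrix.fromBlocks
    (!![0, x₁, (a₁ : ℂ);
        x₂, 0, (starRingEnd ℂ) x₁;
        (a₂ : ℂ), (starRingEnd ℂ) x₂, 0])
    (-(!![w₁, w₂, 0; w₃, 0, -w₂; 0, -w₃, -w₁]))
    ((!![w₁, w₂, 0; w₃, 0, -w₂; 0, -w₃, -w₁]).map (starRingEnd ℂ))
    ((!![0, x₁, (a₁ : ℂ);
        x₂, 0, (starRingEnd ℂ) x₁;
        (a₂ : ℂ), (starRingEnd ℂ) x₂, 0]).map (starRingEnd ℂ))

set_option maxHeartbeats 2000000 in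
/-- The real-linear bijection `𝔫 → 𝔫̂` sending
`ν(z₁,z₂,s₁,s₂,y₁,y₂,y₃)` to `ν̂(z₁,z₂,s₁,−s₂,y₁,y₂,y₃)` is an isometry for `K`. -/
theorem stmt18
    (z₁ z₂ : ℂ) (s₁ s₂ : ℝ) (y₁ y₂ y₃ : ℂ)
    (z₁' z₂' : ℂ) (s₁' s₂' : ℝ) (y₁' y₂' y₃' : ℂ) :
    Kform (nuHat z₁ z₂ s₁ (-s₂) y₁ y₂ y₃) (nuHat z₁' z₂' s₁' (-s₂') y₁' y₂' y₃')
      = Kform (nuMat z₁ z₂ s₁ s₂ y₁ y₂ y₃) (nuMat z₁' z₂' s₁' s₂' y₁' y₂' y₃') := by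
  have htr : ∀ (A B C D : Matrix (Fin 3) (Fin 3) ℂ),
      (Matrix.fromBlocks A B C D).trace = A.trace + D.trace := by
    intro A B C D
    simp [Matrix.trace, Fintype.sum_sum_type, Matrix.diag]
  simp only [Kform, nuHat, nuMat, Matrix.fromBlocks_multiply, htr]
  simp only [Matrix.trace_fin_three, Matrix.add_apply, Matrix.mul_apply, Fin.sum_univ_three,
    Matrix.map_apply, Matrix.neg_apply, Matrix.of_apply, Matrix.cons_val', Matrix.cons_val_zero,
    Matrix.cons_val_one, Matrix.head_cons, Matrix.empty_val', Matrix.cons_val_fin_one,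
    Matrix.head_fin_const, Matrix.cons_val_two, Matrix.tail_cons]
  simp only [Complex.add_re, Complex.mul_re, Complex.neg_re, Complex.neg_im, Complex.add_im,
    Complex.mul_im, Complex.conj_re, Complex.conj_im, Complex.I_re, Complex.I_im,
    Complex.ofReal_re, Complex.ofReal_im, Complex.zero_re, Complex.zero_im, map_zero,
    map_neg, _root_.map_mul, Complex.conj_conj, Complex.conj_I, Complex.conj_ofReal,
    Complex.ofReal_neg, mul_zero, zero_mul, mul_one, one_mul, zero_add, add_zero, neg_neg,
    zero_sub, sub_zero, neg_zero]
  ring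
end

section
/- Let a, b ∈ ℝ with b² = 3a², let S₀ := diag(a + ib, −2a, a − ib) ∈ Mat₃(ℂ), let S ∈ Mat₆(ℂ) be the block-diagonal matrix with 3×3 blocks S₀ and conj(S₀), and let Ŝ := −S̄ (the negative of the entrywise complex conjugate of S). Then for all A, B ∈ 𝔫 one has K( A·S − S·A, B·Ŝ − Ŝ·B ) = 12·a²·K(A,B). -/
open Matrix

lemma commDiagTrace {n : Type*} [Fintype n] [DecidableEq n]
    (A B : Matrix n n ℂ) (D E : n → ℂ) (c : ℂ)
    (h : ∀ i j, A i j * B j i * ((D j - D i) * (E i - E j)) = c * (A i j * B j i)) :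
    Matrix.trace ((A * Matrix.diagonal D - Matrix.diagonal D * A) *
      (B * Matrix.diagonal E - Matrix.diagonal E * B)) = c * Matrix.trace (A * B) := by
  have hM : A * Matrix.diagonal D - Matrix.diagonal D * A =
      Matrix.of fun i j => A i j * (D j - D i) := by
    ext i j
    simp only [Matrix.sub_apply, Matrix.mul_diagonal, Matrix.diagonal_mul, Matrix.of_apply]
    ring
  have hN : B * Matrix.diagonal E - Matrix.diagonal E * B =
      Matrix.of fun i j => B i j * (E j - E i) := by
    ext i j
    simp only [Matrix.sub_apply, Matrix.mul_diagonal, Matrix.diagonal_mul, Matrix.of_apply]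
    ring
  rw [hM, hN]
  simp only [Matrix.trace, Matrix.diag, Matrix.mul_apply, Matrix.of_apply, Finset.mul_sum]
  refine Finset.sum_congr rfl fun i _ => Finset.sum_congr rfl fun j _ => ?_
  linear_combination h i j

set_option maxHeartbeats 1000000 in
/-- For `b² = 3a²`, `S₀ = diag(a+ib, −2a, a−ib)`,
`S = diag(S₀, conj S₀)` and `Ŝ = −S̄`, one has
`K([A,S], [B,Ŝ]) = 12a²·K(A,B)` for all `A, B ∈ 𝔫`. -/
theorem stmt19 (a b : ℝ) (hb : b ^ 2 = 3 * a ^ 2)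
    (S₀ : Matrix (Fin 3) (Fin 3) ℂ)
    (hS₀ : S₀ = Matrix.diagonal ![(a : ℂ) + (b : ℂ) * Complex.I, -2 * (a : ℂ),
      (a : ℂ) - (b : ℂ) * Complex.I])
    (S Shat : Matrix (Fin 3 ⊕ Fin 3) (Fin 3 ⊕ Fin 3) ℂ)
    (hS : S = Matrix.fromBlocks S₀ 0 0 (S₀.map (starRingEnd ℂ)))
    (hShat : Shat = -(S.map (starRingEnd ℂ)))
    (nset : Set (Matrix (Fin 3 ⊕ Fin 3) (Fin 3 ⊕ Fin 3) ℂ))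
    (hnset : nset = {W | ∃ (z₁ z₂ : ℂ) (s₁ s₂ : ℝ) (y₁ y₂ y₃ : ℂ),
      W = nuMat z₁ z₂ s₁ s₂ y₁ y₂ y₃}) :
    ∀ A ∈ nset, ∀ B ∈ nset,
      Kform (A * S - S * A) (B * Shat - Shat * B) = 12 * a ^ 2 * Kform A B := by
  subst hS₀ hnset
  set v : Fin 3 → ℂ := ![(a : ℂ) + (b : ℂ) * Complex.I, -2 * (a : ℂ),
      (a : ℂ) - (b : ℂ) * Complex.I] with hv
  set D : Fin 3 ⊕ Fin 3 → ℂ := Sum.elim v (fun k => (starRingEnd ℂ) (v k)) with hD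
  set E : Fin 3 ⊕ Fin 3 → ℂ := fun i => -((starRingEnd ℂ) (D i)) with hE
  have hSd : S = Matrix.diagonal D := by
    rw [hS, Matrix.diagonal_map (map_zero _), Matrix.fromBlocks_diagonal]
  have hShatd : Shat = Matrix.diagonal E := by
    rw [hShat, hSd, Matrix.diagonal_map (map_zero _), hE, ← Matrix.diagonal_neg]
  rintro A ⟨z₁, z₂, s₁, s₂, y₁, y₂, y₃, rfl⟩ B ⟨w₁, w₂, t₁, t₂, x₁, x₂, x₃, rfl⟩
  have key : ∀ i j, (nuMat z₁ z₂ s₁ s₂ y₁ y₂ y₃) i j * (nuMat w₁ w₂ t₁ t₂ x₁ x₂ x₃) j i *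
      ((D j - D i) * (E i - E j)) =
      ((12 * a ^ 2 : ℝ) : ℂ) *
        ((nuMat z₁ z₂ s₁ s₂ y₁ y₂ y₃) i j * (nuMat w₁ w₂ t₁ t₂ x₁ x₂ x₃) j i) := by
    have hC : ∀ i j, (nuMat z₁ z₂ s₁ s₂ y₁ y₂ y₃) i j * (nuMat w₁ w₂ t₁ t₂ x₁ x₂ x₃) j i = 0 ∨
        (D j - D i) * (E i - E j) = ((12 * a ^ 2 : ℝ) : ℂ) := by
      rintro (i | i) (j | j) <;> fin_cases i <;> fin_cases j <;>
        first
          | (left; simp [nuMat]; done)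
          | (right
             simp only [hE, hD, hv, Sum.elim_inl, Sum.elim_inr, Matrix.cons_val_zero,
               Matrix.cons_val_one, Matrix.head_cons, Matrix.cons_val_two, Matrix.tail_cons,
               map_add, map_sub, _root_.map_mul, map_neg, Complex.conj_ofReal, Complex.conj_I,
               Complex.conj_conj, map_ofNat]
             apply Complex.ext <;>
               simp [Complex.add_re, Complex.add_im, Complex.mul_re,
                 Complex.mul_im, Complex.sub_re, Complex.sub_im, Complex.neg_re,
                 Complex.neg_im, Complex.I_re, Complex.I_im, Complex.ofReal_re,
                 Complex.ofReal_im, ← Complex.ofReal_pow] <;> ring_nf <;> nlinarith [hb])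
    intro i j
    rcases hC i j with h | h
    · rw [h]; ring
    · rw [h]; ring
  have htr := commDiagTrace (nuMat z₁ z₂ s₁ s₂ y₁ y₂ y₃) (nuMat w₁ w₂ t₁ t₂ x₁ x₂ x₃)
      D E ((12 * a ^ 2 : ℝ) : ℂ) key
  rw [Kform, Kform, hSd, hShatd, htr, Complex.re_ofReal_mul]
  ring
end
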